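/- arXiv:2507.03193 — 7 statements merged into one kernel-verified Lean document; each statement's English description precedes it below -/
import Mathlib

section
/- For every Abelian group G and non-negative integers d, k, n with n ≥ 1 and d ≤ k ≤ n − d, the following holds: every degree-d polynomial P : {0,1}^n_k → G that is not identically zero on {0,1}^n_k satisfies Pr_{x uniform on {0,1}^n_k}[P(x) ≠ 0] ≥ C(n−2d, k−d) / C(n, k), where C(a,b) denotes the binomial coefficient. -/
/-!
STATEMENT 1: Suboptimal distance lemma for slices (ABPSS25, Lemma 5.1.6).
Points of the slice {0,1}^n_k are encoded as `A : Finset (Fin n)` with `A.card = k`.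
-/

open Finset

set_option linter.unusedSectionVars false
attribute [local instance] Classical.propDecidable

variable {n : ℕ} {G : Type} [AddCommGroup G]

def evalP (a : Finset (Fin n) → G) (d : ℕ) (A : Finset (Fin n)) : G :=
  ∑ S ∈ A.powerset.filter (fun S => S.card ≤ d), a S

lemma evalP_zero (a : Finset (Fin n) → G) (A : Finset (Fin n)) :
    evalP a 0 A = a ∅ := by
  unfold evalP
  have h : A.powerset.filter (fun S => S.card ≤ 0) = {∅} := by
    ext S
    simp only [Finset.mem_filter, Finset.mem_powerset, Nat.le_zero,
      Finset.card_eq_zero, Finset.mem_singleton]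
    exact ⟨fun h => h.2, fun h => ⟨h ▸ Finset.empty_subset A, h⟩⟩
  rw [h, Finset.sum_singleton]

lemma evalP_insert (a : Finset (Fin n) → G) (d : ℕ) (i : Fin n)
    (B : Finset (Fin n)) (hi : i ∉ B) :
    evalP a (d+1) (insert i B) =
      evalP a (d+1) B + evalP (fun S => a (insert i S)) d B := by
  unfold evalP
  have hdisj : Disjoint (B.powerset.filter (fun S => S.card ≤ d+1))
      ((Finset.image (insert i) B.powerset).filter (fun S => S.card ≤ d+1)) := by
    rw [Finset.disjoint_left]
    intro S hS hS'
    simp only [Finset.mem_filter, Finset.mem_powerset, Finset.mem_image] at hS hS'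
    obtain ⟨⟨T, hT, rfl⟩, -⟩ := hS'
    exact hi (hS.1 (Finset.mem_insert_self i T))
  rw [Finset.powerset_insert, Finset.filter_union, Finset.sum_union hdisj]
  congr 1
  rw [Finset.filter_image]
  rw [Finset.sum_image]
  · apply Finset.sum_congr
    · ext S
      simp only [Finset.mem_filter, Finset.mem_powerset, and_congr_right_iff]
      intro hS
      have : i ∉ S := fun h => hi (hS h)
      rw [Finset.card_insert_of_notMem this]
      omega
    · intro _ _; rfl
  · intro S hS T hT hST
    simp only [Finset.mem_coe, Finset.mem_filter, Finset.mem_powerset] at hS hT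
    have hiS : i ∉ S := fun h => hi (hS.1 h)
    have hiT : i ∉ T := fun h => hi (hT.1 h)
    have := congrArg (fun X => Finset.erase X i) hST
    simpa [Finset.erase_insert hiS, Finset.erase_insert hiT] using this

lemma derivEq (a : Finset (Fin n) → G) (d : ℕ) (i j : Fin n)
    (B : Finset (Fin n)) (hi : i ∉ B) (hj : j ∉ B) :
    evalP a (d+1) (insert i B) - evalP a (d+1) (insert j B)
      = evalP (fun S => a (insert i S) - a (insert j S)) d B := by
  rw [evalP_insert a d i B hi, evalP_insert a d j B hj]
  have : evalP (fun S => a (insert i S) - a (insert j S)) d B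
      = evalP (fun S => a (insert i S)) d B - evalP (fun S => a (insert j S)) d B := by
    unfold evalP
    rw [← Finset.sum_sub_distrib]
  rw [this]
  abel

lemma const_of_swap (f : Finset (Fin n) → G) (V : Finset (Fin n)) (k : ℕ)
    (hswap : ∀ i ∈ V, ∀ j ∈ V, i ≠ j → ∀ B ⊆ V, B.card = k - 1 → i ∉ B → j ∉ B →
      f (insert i B) = f (insert j B)) :
    ∀ m (A A' : Finset (Fin n)), A ⊆ V → A' ⊆ V → A.card = k → A'.card = k →
      (A \ A').card ≤ m → f A = f A' := by
  intro m
  induction m with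
  | zero =>
    intro A A' hAV hA'V hA hA' hcard
    have : A \ A' = ∅ := Finset.card_eq_zero.mp (Nat.le_zero.mp hcard)
    have hsub : A ⊆ A' := by
      intro x hx
      by_contra hx'
      exact (Finset.notMem_empty x) (this ▸ Finset.mem_sdiff.mpr ⟨hx, hx'⟩)
    rw [Finset.eq_of_subset_of_card_le hsub (by omega)]
  | succ m ih =>
    intro A A' hAV hA'V hA hA' hcard
    rcases le_or_gt (A \ A').card m with h | h
    · exact ih A A' hAV hA'V hA hA' h
    have hne : (A \ A').Nonempty := Finset.card_pos.mp (by omega)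
    obtain ⟨i, hi⟩ := hne
    have hne' : (A' \ A).Nonempty := by
      rw [← Finset.card_pos, ← Finset.card_sdiff_comm (hA.trans hA'.symm)]
      omega
    obtain ⟨j, hj⟩ := hne'
    rw [Finset.mem_sdiff] at hi hj
    set B := A.erase i with hB
    have hiB : i ∉ B := Finset.notMem_erase i A
    have hjB : j ∉ B := fun h => hj.2 (Finset.erase_subset i A h)
    have hBV : B ⊆ V := (Finset.erase_subset i A).trans hAV
    have hBcard : B.card = k - 1 := by
      rw [hB, Finset.card_erase_of_mem hi.1, hA]
    have hA_eq : A = insert i B := (Finset.insert_erase hi.1).symm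
    have step : f A = f (insert j B) := by
      rw [hA_eq]
      exact hswap i (hAV hi.1) j (hA'V hj.1) (fun h => hj.2 (h ▸ hi.1)) B hBV hBcard hiB hjB
    rw [step]
    apply ih (insert j B) A' (Finset.insert_subset (hA'V hj.1) hBV) hA'V
    · rw [Finset.card_insert_of_notMem hjB, hBcard]
      have : 1 ≤ k := by
        have := Finset.card_pos.mpr ⟨i, hi.1⟩
        omega
      omega
    · exact hA'
    · have hsub : insert j B \ A' ⊆ (A \ A').erase i := by
        intro x hx
        simp only [Finset.mem_sdiff, Finset.mem_insert] at hx
        rcases hx.1 with rfl | hxB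
        · exact absurd hj.1 hx.2
        · refine Finset.mem_erase.mpr ⟨fun h => hiB (h ▸ hxB), Finset.mem_sdiff.mpr
            ⟨Finset.erase_subset i A hxB, hx.2⟩⟩
      calc (insert j B \ A').card ≤ ((A \ A').erase i).card := Finset.card_le_card hsub
        _ = (A \ A').card - 1 := Finset.card_erase_of_mem (Finset.mem_sdiff.mpr hi)
        _ ≤ m := by omega

lemma choose_ineq : ∀ d k m : ℕ, d ≤ k → k + d ≤ m →
    (m - 2 * d).choose (k - d) ≤ m.choose k := by
  intro d
  induction d with
  | zero => simp
  | succ d ih =>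
    intro k m hdk hkm
    have h1 : (m - 2 * (d+1)).choose (k - (d+1)) = ((m-2) - 2*d).choose ((k-1) - d) := by
      congr 1 <;> omega
    rw [h1]
    refine le_trans (ih (k-1) (m-2) (by omega) (by omega)) ?_
    refine le_trans (Nat.choose_le_choose (k-1) (show m-2 ≤ m-1 by omega)) ?_
    calc (m-1).choose (k-1) ≤ (m-1).choose (k-1) + (m-1).choose (k-1+1) :=
          Nat.le_add_right _ _
      _ = (m-1+1).choose (k-1+1) := (Nat.choose_succ_succ _ _).symm
      _ = m.choose k := by congr 1 <;> omega

lemma insert_sdiff_pair (i j : Fin n) (x : Fin n) (B : Finset (Fin n))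
    (hx : x = i ∨ x = j) (hiB : i ∉ B) (hjB : j ∉ B) :
    insert x B \ ({i, j} : Finset (Fin n)) = B := by
  ext t
  simp only [Finset.mem_sdiff, Finset.mem_insert, Finset.mem_singleton]
  constructor
  · rintro ⟨rfl | htB, hnot⟩
    · exact absurd hx hnot
    · exact htB
  · intro htB
    refine ⟨Or.inr htB, ?_⟩
    rintro (rfl | rfl)
    · exact hiB htB
    · exact hjB htB

lemma main_count (G : Type) [AddCommGroup G] :
    ∀ (d : ℕ) (V : Finset (Fin n)) (k : ℕ) (a : Finset (Fin n) → G),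
    d ≤ k → k + d ≤ V.card →
    (∃ A ∈ V.powersetCard k, evalP a d A ≠ 0) →
    (V.card - 2 * d).choose (k - d) ≤
      ((V.powersetCard k).filter (fun A => evalP a d A ≠ 0)).card := by
  intro d
  induction d with
  | zero =>
    intro V k a _ hkV ⟨A₀, hA₀, hA₀nz⟩
    have hconst : ∀ A ∈ V.powersetCard k, evalP a 0 A ≠ 0 := by
      intro A _
      rw [evalP_zero]
      rw [evalP_zero] at hA₀nz
      exact hA₀nz
    rw [Finset.filter_true_of_mem hconst, Finset.card_powersetCard]
    simp
  | succ d ih =>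
    intro V k a hdk hkV hex
    by_cases hcase : ∃ i ∈ V, ∃ j ∈ V, i ≠ j ∧ ∃ B ∈ (V \ {i, j}).powersetCard (k-1),
        evalP (fun S => a (insert i S) - a (insert j S)) d B ≠ 0
    · obtain ⟨i, hiV, j, hjV, hij, hBex⟩ := hcase
      set W := V \ ({i, j} : Finset (Fin n)) with hW
      have hsubV : ({i, j} : Finset (Fin n)) ⊆ V := by
        intro x hx
        rcases Finset.mem_insert.mp hx with rfl | hx
        · exact hiV
        · exact (Finset.mem_singleton.mp hx) ▸ hjV
      have hWcard : W.card = V.card - 2 := by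
        rw [hW, Finset.card_sdiff_of_subset hsubV, Finset.card_insert_of_notMem
          (by simpa using hij), Finset.card_singleton]
      set b : Finset (Fin n) → G := fun S => a (insert i S) - a (insert j S) with hb
      have hIH := ih W (k-1) b (by omega) (by omega) hBex
      set φ : Finset (Fin n) → Finset (Fin n) :=
        fun B => if evalP a (d+1) (insert i B) ≠ 0 then insert i B else insert j B with hφ
      have hmem : ∀ B ∈ (W.powersetCard (k-1)).filter (fun B => evalP b d B ≠ 0),
          (i ∉ B ∧ j ∉ B) ∧ B ⊆ V ∧ B.card = k - 1 ∧ evalP b d B ≠ 0 := by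
        intro B hB
        rw [Finset.mem_filter, Finset.mem_powersetCard] at hB
        obtain ⟨⟨hBW, hBc⟩, hBnz⟩ := hB
        refine ⟨⟨fun h => ?_, fun h => ?_⟩, fun x hx => (Finset.mem_sdiff.mp (hBW hx)).1,
          hBc, hBnz⟩
        · simpa using (Finset.mem_sdiff.mp (hBW h)).2
        · simpa using (Finset.mem_sdiff.mp (hBW h)).2
      have hmaps : ∀ B ∈ (W.powersetCard (k-1)).filter (fun B => evalP b d B ≠ 0),
          φ B ∈ (V.powersetCard k).filter (fun A => evalP a (d+1) A ≠ 0) := by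
        intro B hB
        obtain ⟨⟨hiB, hjB⟩, hBV, hBc, hBnz⟩ := hmem B hB
        have hder := derivEq a d i j B hiB hjB
        rw [Finset.mem_filter, Finset.mem_powersetCard, hφ]
        by_cases hnz : evalP a (d+1) (insert i B) ≠ 0
        · simp only [hnz, if_true, ne_eq, not_false_iff]
          exact ⟨⟨Finset.insert_subset hiV hBV,
            by rw [Finset.card_insert_of_notMem hiB, hBc]; omega⟩, by simpa using hnz⟩
        · push_neg at hnz
          simp only [hnz, ne_eq, not_true_eq_false, if_false]
          refine ⟨⟨Finset.insert_subset hjV hBV,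
            by rw [Finset.card_insert_of_notMem hjB, hBc]; omega⟩, ?_⟩
          intro hzero
          apply hBnz
          show evalP (fun S => a (insert i S) - a (insert j S)) d B = 0
          rw [← hder, hnz, hzero, sub_zero]
      have hinj : Set.InjOn φ
          ↑((W.powersetCard (k-1)).filter (fun B => evalP b d B ≠ 0)) := by
        intro B₁ h₁ B₂ h₂ heq
        obtain ⟨⟨hi1, hj1⟩, -, -, -⟩ := hmem B₁ (by exact_mod_cast h₁)
        obtain ⟨⟨hi2, hj2⟩, -, -, -⟩ := hmem B₂ (by exact_mod_cast h₂)
        have e1 : φ B₁ \ ({i, j} : Finset (Fin n)) = B₁ := by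
          rw [hφ]
          dsimp only
          split
          · exact insert_sdiff_pair i j i B₁ (Or.inl rfl) hi1 hj1
          · exact insert_sdiff_pair i j j B₁ (Or.inr rfl) hi1 hj1
        have e2 : φ B₂ \ ({i, j} : Finset (Fin n)) = B₂ := by
          rw [hφ]
          dsimp only
          split
          · exact insert_sdiff_pair i j i B₂ (Or.inl rfl) hi2 hj2
          · exact insert_sdiff_pair i j j B₂ (Or.inr rfl) hi2 hj2
        rw [← e1, ← e2, heq]
      have hle := Finset.card_le_card_of_injOn φ hmaps hinj
      calc (V.card - 2*(d+1)).choose (k - (d+1))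
          = (W.card - 2*d).choose (k-1-d) := by rw [hWcard]; congr 1 <;> omega
        _ ≤ _ := hIH
        _ ≤ _ := hle
    · push_neg at hcase
      obtain ⟨A₀, hA₀, hA₀nz⟩ := hex
      have hswap : ∀ i ∈ V, ∀ j ∈ V, i ≠ j → ∀ B ⊆ V, B.card = k - 1 → i ∉ B → j ∉ B →
          evalP a (d+1) (insert i B) = evalP a (d+1) (insert j B) := by
        intro i hiV j hjV hij B hBV hBc hiB hjB
        have hBW : B ∈ (V \ ({i, j} : Finset (Fin n))).powersetCard (k-1) := by
          rw [Finset.mem_powersetCard]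
          refine ⟨fun x hx => Finset.mem_sdiff.mpr ⟨hBV hx, ?_⟩, hBc⟩
          simp only [Finset.mem_insert, Finset.mem_singleton]
          push_neg
          exact ⟨fun h => hiB (h ▸ hx), fun h => hjB (h ▸ hx)⟩
        have hz := hcase i hiV j hjV hij B hBW
        have hder := derivEq a d i j B hiB hjB
        rw [hz] at hder
        exact sub_eq_zero.mp hder
      have hall : ∀ A ∈ V.powersetCard k, evalP a (d+1) A ≠ 0 := by
        intro A hA
        rw [Finset.mem_powersetCard] at hA
        rw [Finset.mem_powersetCard] at hA₀
        rw [const_of_swap (evalP a (d+1)) V k hswap (A \ A₀).card A A₀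
          hA.1 hA₀.1 hA.2 hA₀.2 le_rfl]
        exact hA₀nz
      rw [Finset.filter_true_of_mem hall, Finset.card_powersetCard]
      exact choose_ineq (d+1) k V.card hdk hkV

theorem suboptimal_distance_lemma_slices
    (G : Type) [AddCommGroup G] (d n k : ℕ)
    (hn : 1 ≤ n) (hdk : d ≤ k) (hkn : k ≤ n - d)
    (P : Finset (Fin n) → G)
    (hP : ∃ a : Finset (Fin n) → G, ∀ A : Finset (Fin n), A.card = k →
      P A = ∑ S ∈ Finset.univ.filter (fun S : Finset (Fin n) => S.card ≤ d),
        (∏ i ∈ S, if i ∈ A then (1 : ℤ) else 0) • a S)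
    (hnz : ∃ A : Finset (Fin n), A.card = k ∧ P A ≠ 0) :
    ((n - 2 * d).choose (k - d) : ℝ) / (n.choose k : ℝ) ≤
      (Nat.card {A : Finset (Fin n) // A.card = k ∧ P A ≠ 0} : ℝ) /
        (n.choose k : ℝ) := by
  classical
  obtain ⟨a, ha⟩ := hP
  have hPeq : ∀ A : Finset (Fin n), A.card = k → P A = evalP a d A := by
    intro A hA
    rw [ha A hA]; rw [evalP]
    have h1 : ∀ S : Finset (Fin n),
        (∏ i ∈ S, if i ∈ A then (1:ℤ) else 0) • a S = if S ⊆ A then a S else 0 := by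
      intro S
      rw [Finset.prod_boole]
      by_cases h : S ⊆ A
      · rw [if_pos (fun i hi => h hi), if_pos h, one_smul]
      · rw [if_neg (fun hh => h (fun i hi => hh i hi)), if_neg h, zero_smul]
    rw [Finset.sum_congr rfl (fun S _ => h1 S), ← Finset.sum_filter]
    apply Finset.sum_congr _ (fun _ _ => rfl)
    ext S
    simp only [Finset.mem_filter, Finset.mem_univ, true_and, Finset.mem_powerset]
    exact and_comm
  have hset : (Finset.univ.filter (fun A : Finset (Fin n) => A.card = k ∧ P A ≠ 0))
      = ((Finset.univ : Finset (Fin n)).powersetCard k).filter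
          (fun A => evalP a d A ≠ 0) := by
    ext A
    simp only [Finset.mem_filter, Finset.mem_univ, true_and,
      Finset.mem_powersetCard_univ]
    constructor
    · rintro ⟨hk, hnz'⟩
      exact ⟨hk, by rwa [← hPeq A hk]⟩
    · rintro ⟨hk, hnz'⟩
      exact ⟨hk, by rwa [hPeq A hk]⟩
  have hcard : Nat.card {A : Finset (Fin n) // A.card = k ∧ P A ≠ 0}
      = (Finset.univ.filter (fun A : Finset (Fin n) => A.card = k ∧ P A ≠ 0)).card := by
    rw [Nat.card_eq_fintype_card, Fintype.card_subtype]
  obtain ⟨A₀, hA₀k, hA₀nz⟩ := hnz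
  have hucard : (Finset.univ : Finset (Fin n)).card = n := by simp
  have hmain := main_count G d (Finset.univ : Finset (Fin n)) k a hdk
    (by omega) ⟨A₀, Finset.mem_powersetCard_univ.mpr hA₀k, by rwa [← hPeq A₀ hA₀k]⟩
  rw [hucard] at hmain
  have hpos : (0 : ℝ) < (n.choose k : ℝ) := by
    exact_mod_cast Nat.choose_pos (by omega)
  rw [div_le_div_iff_of_pos_right hpos] <;> try rw [div_le_div_right hpos]
  calc ((n - 2*d).choose (k-d) : ℝ)
      ≤ (((Finset.univ.powersetCard k).filter (fun A => evalP a d A ≠ 0)).card : ℝ) := by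
        exact_mod_cast hmain
    _ = _ := by rw [hcard, hset]
end

section
/- Let F be any field, let n and k be natural numbers with k ∈ [n], and fix an arbitrary point a ∈ {0,1}^n_k. Then the minimum number m of hyperplanes H_1, …, H_m over F (each H_i being the zero set in F^n of a polynomial of degree exactly 1) such that the union H_1 ∪ ⋯ ∪ H_m intersects {0,1}^n_k exactly in the set {0,1}^n_k \ {a} is equal to min{k, n−k}. -/
/-!
STATEMENT 2: Exact hyperplane cover of a slice with one point removed.
Points of the slice {0,1}^n_k are encoded as `A : Finset (Fin n)` with `A.card = k`,
embedded into F^n via the 0/1 indicator. A hyperplane is the zero set of an affine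
polynomial `c0 + ∑ j c_j x_j` of degree exactly 1 (the linear part `c` is nonzero).
The minimum number of hyperplanes whose union meets the slice exactly in the slice
minus the point `a` equals `min k (n - k)`.
-/

open Finset

lemma sum_superset_neg_one_pow {F : Type} [Field F] {t : ℕ} (T : Finset (Fin t))
    (hT : T ≠ univ) :
    ∑ S : Finset (Fin t), (-1 : F) ^ S.card * (if T ⊆ S then 1 else 0) = 0 := by
  have h1 : ∑ S : Finset (Fin t), (-1 : F) ^ S.card * (if T ⊆ S then 1 else 0)
      = ∑ S ∈ univ.filter (fun S => T ⊆ S), (-1 : F) ^ S.card := by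
    rw [sum_filter]
    exact sum_congr rfl fun S _ => by split <;> ring
  rw [h1]
  have h2 : ∑ S ∈ univ.filter (fun S => T ⊆ S), (-1 : F) ^ S.card
      = ∑ R ∈ Tᶜ.powerset, (-1 : F) ^ (T.card + R.card) := by
    refine sum_bij' (fun S _ => S \ T) (fun R _ => T ∪ R) ?_ ?_ ?_ ?_ ?_
    · intro S hS
      simp only [mem_filter, mem_univ, true_and] at hS
      simp only [mem_powerset]
      intro x hx
      simp only [mem_sdiff] at hx
      simp [mem_compl, hx.2]
    · intro R hR
      simp
    · intro S hS
      simp only [mem_filter, mem_univ, true_and] at hS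
      exact union_sdiff_of_subset hS
    · intro R hR
      simp only [mem_powerset] at hR
      apply union_sdiff_cancel_left
      rw [disjoint_left]
      intro x hx hxR
      exact (mem_compl.1 (hR hxR)) hx
    · intro S hS
      simp only [mem_filter, mem_univ, true_and] at hS
      congr 1
      rw [← card_sdiff_add_card_eq_card hS]
      ring
  rw [h2]
  have h3 : ∀ R ∈ Tᶜ.powerset, (-1 : F) ^ (T.card + R.card)
      = (-1 : F) ^ T.card * (-1 : F) ^ R.card := fun R _ => pow_add _ _ _
  rw [sum_congr rfl h3, ← mul_sum]
  have h4 : ∑ R ∈ Tᶜ.powerset, (-1 : F) ^ R.card = 0 := by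
    have := Finset.sum_powerset_neg_one_pow_card_of_nonempty
      (x := Tᶜ) (by rw [nonempty_iff_ne_empty]; intro h; exact hT (by simpa using congrArg compl h))
    calc ∑ R ∈ Tᶜ.powerset, (-1 : F) ^ R.card
        = ((∑ R ∈ Tᶜ.powerset, (-1 : ℤ) ^ R.card : ℤ) : F) := by push_cast; rfl
      _ = 0 := by rw [this]; simp
  rw [h4, mul_zero]

lemma alt_sum_zero {F : Type} [Field F] {t m : ℕ} (hm : m < t)
    (d : Fin m → F) (e : Fin m → Fin t → F) :
    ∑ S : Finset (Fin t), (-1 : F) ^ S.card *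
      ∏ i : Fin m, (d i + ∑ s : Fin t, e i s * (if s ∈ S then (1:F) else 0)) = 0 := by
  classical
  -- expand each factor as a sum over Option (Fin t)
  have expand : ∀ S : Finset (Fin t),
      ∏ i : Fin m, (d i + ∑ s : Fin t, e i s * (if s ∈ S then (1:F) else 0))
      = ∑ f ∈ Fintype.piFinset (fun _ : Fin m => (univ : Finset (Option (Fin t)))),
          ∏ i : Fin m, Option.elim (f i) (d i) (fun s => e i s * (if s ∈ S then 1 else 0)) := by
    intro S
    have : ∀ i : Fin m, (d i + ∑ s : Fin t, e i s * (if s ∈ S then (1:F) else 0))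
        = ∑ o : Option (Fin t),
            Option.elim o (d i) (fun s => e i s * (if s ∈ S then 1 else 0)) := by
      intro i
      rw [Fintype.sum_option]
      simp
    rw [prod_congr rfl fun i _ => this i, prod_univ_sum]
  simp only [expand, mul_sum]
  rw [Finset.sum_comm]
  refine sum_eq_zero fun f _ => ?_
  set T : Finset (Fin t) := univ.filter (fun s => ∃ i, f i = some s) with hTdef
  have hT : T ≠ univ := by
    intro hTu
    have hall : ∀ s : Fin t, ∃ i, f i = some s := by
      intro s
      have : s ∈ T := hTu ▸ mem_univ s
      simpa [hTdef] using this
    have hinj : Function.Injective (fun s : Fin t => (hall s).choose) := by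
      intro s s' hss
      simp only at hss
      have h1 := (hall s).choose_spec
      have h2 := (hall s').choose_spec
      rw [hss, h2] at h1
      exact Option.some_injective _ h1.symm
    have := Fintype.card_le_of_injective _ hinj
    simp only [Fintype.card_fin] at this
    omega
  have hprod : ∀ S : Finset (Fin t),
      ∏ i : Fin m, Option.elim (f i) (d i) (fun s => e i s * (if s ∈ S then (1:F) else 0))
      = (∏ i : Fin m, Option.elim (f i) (d i) (e i)) * (if T ⊆ S then 1 else 0) := by
    intro S
    have step : ∀ i : Fin m,
        Option.elim (f i) (d i) (fun s => e i s * (if s ∈ S then (1:F) else 0))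
        = Option.elim (f i) (d i) (e i) *
          (if (∀ s, f i = some s → s ∈ S) then 1 else 0) := by
      intro i
      cases hfi : f i with
      | none => simp
      | some s =>
        simp only [Option.elim_some]
        by_cases hs : s ∈ S
        · rw [if_pos hs, if_pos (fun s' hs' => by cases hs'; exact hs)]
        · rw [if_neg hs, if_neg (fun h => hs (h s rfl))]
    rw [prod_congr rfl fun i _ => step i, prod_mul_distrib, Fintype.prod_boole]
    congr 1
    congr 1
    rw [eq_iff_iff]
    constructor
    · intro h s hsT
      simp only [hTdef, mem_filter, mem_univ, true_and] at hsT
      obtain ⟨i, hi⟩ := hsT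
      exact h i s hi
    · intro h i s hi
      exact h (by simp [hTdef]; exact ⟨i, hi⟩)
  calc ∑ S : Finset (Fin t), (-1:F) ^ S.card *
        ∏ i : Fin m, Option.elim (f i) (d i) (fun s => e i s * (if s ∈ S then (1:F) else 0))
      = (∏ i : Fin m, Option.elim (f i) (d i) (e i)) *
        ∑ S : Finset (Fin t), (-1:F) ^ S.card * (if T ⊆ S then 1 else 0) := by
        rw [mul_sum]
        refine sum_congr rfl fun S _ => ?_
        rw [hprod S]; ring
    _ = 0 := by rw [sum_superset_neg_one_pow T hT, mul_zero]

theorem exact_hyperplane_cover_slice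
    (F : Type) [Field F] (n k : ℕ) (hk1 : 1 ≤ k) (hkn : k ≤ n)
    (a : Finset (Fin n)) (ha : a.card = k) :
    IsLeast
      {m : ℕ | ∃ (c0 : Fin m → F) (c : Fin m → Fin n → F),
        (∀ i : Fin m, c i ≠ 0) ∧
        ∀ A : Finset (Fin n), A.card = k →
          ((∃ i : Fin m,
              c0 i + ∑ j : Fin n, c i j * (if j ∈ A then (1 : F) else 0) = 0) ↔
            A ≠ a)}
      (min k (n - k)) := by
  classical
  constructor
  · -- membership
    rcases le_total k (n - k) with hle | hle
    · rw [min_eq_left hle]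
      have hcard : Fintype.card {x // x ∈ a} = k := by rw [Fintype.card_coe, ha]
      set e := (Fintype.equivFinOfCardEq hcard).symm with he
      refine ⟨fun _ => 0, fun i j => if j = (e i : Fin n) then 1 else 0, ?_, ?_⟩
      · intro i hci
        have := congrFun hci (e i : Fin n)
        simp at this
      · intro A hA
        have hsum : ∀ i : Fin k,
            (0:F) + ∑ j : Fin n, (if j = (e i : Fin n) then (1:F) else 0) *
              (if j ∈ A then 1 else 0)
            = if (e i : Fin n) ∈ A then 1 else 0 := by
          intro i
          rw [zero_add, Finset.sum_eq_single (e i : Fin n)]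
          · simp
          · intro j _ hj; rw [if_neg hj, zero_mul]
          · simp
        simp only [hsum]
        constructor
        · rintro ⟨i, hi⟩ hAa
          by_cases hmem : (e i : Fin n) ∈ A
          · rw [if_pos hmem] at hi; exact one_ne_zero hi
          · exact hmem (hAa ▸ (e i).2)
        · intro hAa
          have hnsub : ¬ a ⊆ A := by
            intro hsub
            exact hAa (Finset.eq_of_subset_of_card_le hsub (by rw [hA, ha])).symm
          obtain ⟨x, hxa, hxA⟩ := not_subset.1 hnsub
          exact ⟨e.symm ⟨x, hxa⟩, by simp [hxA]⟩
    · rw [min_eq_right hle]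
      have hcard : Fintype.card {x // x ∈ aᶜ} = n - k := by
        rw [Fintype.card_coe, card_compl, Fintype.card_fin, ha]
      set e := (Fintype.equivFinOfCardEq hcard).symm with he
      refine ⟨fun _ => -1, fun i j => if j = (e i : Fin n) then 1 else 0, ?_, ?_⟩
      · intro i hci
        have := congrFun hci (e i : Fin n)
        simp at this
      · intro A hA
        have hsum : ∀ i : Fin (n - k),
            (-1:F) + ∑ j : Fin n, (if j = (e i : Fin n) then (1:F) else 0) *
              (if j ∈ A then 1 else 0)
            = -1 + (if (e i : Fin n) ∈ A then 1 else 0) := by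
          intro i
          congr 1
          rw [Finset.sum_eq_single (e i : Fin n)]
          · simp
          · intro j _ hj; rw [if_neg hj, zero_mul]
          · simp
        simp only [hsum]
        constructor
        · rintro ⟨i, hi⟩ hAa
          have hmem : (e i : Fin n) ∈ A := by
            by_contra hmem
            rw [if_neg hmem] at hi
            simp at hi
          have : (e i : Fin n) ∉ a := mem_compl.1 (e i).2
          exact this (hAa ▸ hmem)
        · intro hAa
          have hnsub : ¬ A ⊆ a := by
            intro hsub
            exact hAa (Finset.eq_of_subset_of_card_le hsub (by rw [hA, ha]))
          obtain ⟨x, hxA, hxa⟩ := not_subset.1 hnsub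
          refine ⟨e.symm ⟨x, mem_compl.2 hxa⟩, ?_⟩
          simp [hxA]
  · -- lower bound
    intro m hm
    by_contra hlt
    push_neg at hlt
    obtain ⟨c0, c, -, H⟩ := hm
    set t := min k (n - k) with ht
    -- injections into a and aᶜ
    have hta : t ≤ a.card := ha ▸ min_le_left _ _
    obtain ⟨s₁, hs₁a, hs₁c⟩ := Finset.exists_subset_card_eq hta
    have h1 : Fintype.card {x // x ∈ s₁} = t := by rw [Fintype.card_coe, hs₁c]
    set e₁ := (Fintype.equivFinOfCardEq h1).symm with he₁
    set u : Fin t → Fin n := fun s => (e₁ s : Fin n) with hu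
    have hu_inj : Function.Injective u := fun s s' hss =>
      e₁.injective (Subtype.coe_injective hss)
    have hu_mem : ∀ s, u s ∈ a := fun s => hs₁a (e₁ s).2
    have htc : t ≤ aᶜ.card := by
      rw [card_compl, Fintype.card_fin, ha]; exact min_le_right _ _
    obtain ⟨s₂, hs₂a, hs₂c⟩ := Finset.exists_subset_card_eq htc
    have h2 : Fintype.card {x // x ∈ s₂} = t := by rw [Fintype.card_coe, hs₂c]
    set e₂ := (Fintype.equivFinOfCardEq h2).symm with he₂
    set v : Fin t → Fin n := fun s => (e₂ s : Fin n) with hv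
    have hv_inj : Function.Injective v := fun s s' hss =>
      e₂.injective (Subtype.coe_injective hss)
    have hv_mem : ∀ s, v s ∉ a := fun s => mem_compl.1 (hs₂a (e₂ s).2)
    set A : Finset (Fin t) → Finset (Fin n) :=
      fun S => (a \ S.image u) ∪ S.image v with hA
    have hdisj : ∀ S : Finset (Fin t), Disjoint (a \ S.image u) (S.image v) := by
      intro S
      rw [disjoint_left]
      rintro x hx hxv
      obtain ⟨s, -, rfl⟩ := mem_image.1 hxv
      exact hv_mem s (mem_sdiff.1 hx).1
    have himgu : ∀ S : Finset (Fin t), S.image u ⊆ a := by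
      rintro S x hx
      obtain ⟨s, -, rfl⟩ := mem_image.1 hx
      exact hu_mem s
    have hAcard : ∀ S, (A S).card = k := by
      intro S
      rw [hA]
      rw [card_union_of_disjoint (hdisj S), card_sdiff_of_subset (himgu S),
        card_image_of_injective _ hu_inj, card_image_of_injective _ hv_inj, ha]
      have : S.card ≤ k := le_trans (le_trans (card_le_card (subset_univ S))
        (by rw [card_univ, Fintype.card_fin])) (min_le_left _ _)
      omega
    -- affine form
    set D : Fin m → F := fun i => c0 i + ∑ j ∈ a, c i j with hD
    set E : Fin m → Fin t → F := fun i s => c i (v s) - c i (u s) with hE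
    have haffine : ∀ (i : Fin m) (S : Finset (Fin t)),
        c0 i + ∑ j : Fin n, c i j * (if j ∈ A S then (1:F) else 0)
        = D i + ∑ s : Fin t, E i s * (if s ∈ S then (1:F) else 0) := by
      intro i S
      have l1 : ∑ j : Fin n, c i j * (if j ∈ A S then (1:F) else 0)
          = ∑ j ∈ A S, c i j := by
        simp [mul_ite, mul_one, mul_zero, sum_ite_mem]
      have l2 : ∑ s : Fin t, E i s * (if s ∈ S then (1:F) else 0)
          = ∑ s ∈ S, E i s := by
        simp [mul_ite, mul_one, mul_zero, sum_ite_mem]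
      rw [l1, l2, hA]
      rw [sum_union (hdisj S), sum_sdiff_eq_sub (himgu S),
        sum_image (fun x _ y _ h => hu_inj h), sum_image (fun x _ y _ h => hv_inj h)]
      simp only [hD, hE, sum_sub_distrib]
      ring
    have hQ0 : (∏ i : Fin m,
        (D i + ∑ s : Fin t, E i s * (if s ∈ (∅ : Finset (Fin t)) then (1:F) else 0))) ≠ 0 := by
      have hAe : A ∅ = a := by simp [hA]
      refine prod_ne_zero_iff.2 fun i _ => ?_
      intro hzero
      have : ∃ i : Fin m,
          c0 i + ∑ j : Fin n, c i j * (if j ∈ a then (1:F) else 0) = 0 := by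
        refine ⟨i, ?_⟩
        rw [← hAe, haffine i ∅]
        exact hzero
      exact ((H a ha).1 this) rfl
    have hQS : ∀ S : Finset (Fin t), S ≠ ∅ →
        (∏ i : Fin m,
          (D i + ∑ s : Fin t, E i s * (if s ∈ S then (1:F) else 0))) = 0 := by
      intro S hS
      have hAne : A S ≠ a := by
        obtain ⟨s, hs⟩ := nonempty_iff_ne_empty.2 hS
        intro hAa
        have : v s ∈ A S := mem_union_right _ (mem_image_of_mem v hs)
        rw [hAa] at this
        exact hv_mem s this
      obtain ⟨i, hi⟩ := (H (A S) (hAcard S)).2 hAne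
      rw [haffine i S] at hi
      exact prod_eq_zero (mem_univ i) hi
    have hkey := alt_sum_zero (F := F) hlt D E
    rw [Finset.sum_eq_single (∅ : Finset (Fin t))] at hkey
    · simp only [card_empty, pow_zero, one_mul] at hkey
      exact hQ0 hkey
    · intro S _ hS
      rw [hQS S hS, mul_zero]
    · intro h
      exact absurd (mem_univ _) h
end

section
/- Let n be an even natural number and d a natural number. Let P : {0,1}^n_{n/2} → ℝ be a degree-d polynomial on the balanced slice that is not identically zero, and let S ⊆ {0,1}^n_{n/2} be the set of points where P is non-zero. Then (1 / C(n, n/2)) · Σ_{x ∈ S} Σ_{y ∈ S} W[x, y] ≥ (|S| / C(n, n/2)) · (1/2^d). -/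
/-!
STATEMENT 4: Lower bound on the two-step probability for the set of non-zeroes
of a degree-d polynomial on the balanced slice.
Points of the balanced slice {0,1}^n_{n/2} are encoded as `A : Finset (Fin n)`
with `A.card = n/2`. `W[u,v] = 1/(2^{n/2} · C(n/2, Δ))` where `2Δ = |u ∆ v|`.
-/

open Finset

/-- The entry of the random walk matrix `W` on the balanced slice. -/
noncomputable def Went (n : ℕ) (u v : Finset (Fin n)) : ℝ :=
  1 / (2 ^ (n / 2) * ((n / 2).choose ((symmDiff u v).card / 2)))

set_option linter.unusedSectionVars false
set_option linter.unusedVariables false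
set_option maxHeartbeats 1000000

section DegLEStuff
variable {ι : Type} [DecidableEq ι]

variable {ι : Type} [DecidableEq ι]

/-- `g` is (representable as) a multilinear polynomial of degree ≤ d in the
variables indexed by `V`, as a function on subsets of `V`. -/
def DegLE (V : Finset ι) (d : ℕ) (g : Finset ι → ℝ) : Prop :=
  ∃ a : Finset ι → ℝ, ∀ A ∈ V.powerset,
    g A = ∑ S ∈ V.powerset.filter (fun S => S.card ≤ d),
      a S * (if S ⊆ A then (1:ℝ) else 0)

lemma degle_ext {V : Finset ι} {d : ℕ} {g g' : Finset ι → ℝ}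
    (h : DegLE V d g) (hgg : ∀ A ∈ V.powerset, g A = g' A) : DegLE V d g' := by
  obtain ⟨a, ha⟩ := h
  exact ⟨a, fun A hA => (hgg A hA) ▸ ha A hA⟩

lemma degle_const (V : Finset ι) (d : ℕ) (c : ℝ) :
    DegLE V d (fun _ => c) := by
  refine ⟨fun S => if S = ∅ then c else 0, fun A hA => ?_⟩
  rw [Finset.sum_eq_single ∅]
  · simp
  · intro S _ hS; simp [hS]
  · intro h; exact absurd (by simp) h

lemma degle_ind {V : Finset ι} {i : ι} (hi : i ∈ V) :
    DegLE V 1 (fun A => if i ∈ A then (1:ℝ) else 0) := by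
  refine ⟨fun S => if S = {i} then 1 else 0, fun A hA => ?_⟩
  rw [Finset.sum_eq_single {i}]
  · simp [Finset.singleton_subset_iff]
  · intro S _ hS; simp [hS]
  · intro h
    exact absurd (by simp [Finset.mem_filter, Finset.mem_powerset,
      Finset.singleton_subset_iff, hi]) h

lemma degle_add {V : Finset ι} {d : ℕ} {f g : Finset ι → ℝ}
    (hf : DegLE V d f) (hg : DegLE V d g) : DegLE V d (fun A => f A + g A) := by
  obtain ⟨a, ha⟩ := hf; obtain ⟨b, hb⟩ := hg
  refine ⟨fun S => a S + b S, fun A hA => ?_⟩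
  show f A + g A = _
  rw [ha A hA, hb A hA, ← Finset.sum_add_distrib]
  exact Finset.sum_congr rfl (fun S _ => by ring)

lemma degle_mul {V : Finset ι} {d₁ d₂ : ℕ} {f g : Finset ι → ℝ}
    (hf : DegLE V d₁ f) (hg : DegLE V d₂ g) :
    DegLE V (d₁ + d₂) (fun A => f A * g A) := by
  classical
  obtain ⟨a, ha⟩ := hf; obtain ⟨b, hb⟩ := hg
  set F₁ := V.powerset.filter (fun S => S.card ≤ d₁)
  set F₂ := V.powerset.filter (fun S => S.card ≤ d₂)
  refine ⟨fun U => ∑ p ∈ (F₁ ×ˢ F₂).filter (fun p => p.1 ∪ p.2 = U),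
    a p.1 * b p.2, fun A hA => ?_⟩
  show f A * g A = _
  rw [ha A hA, hb A hA, Finset.sum_mul_sum]
  have hmaps : ∀ p ∈ F₁ ×ˢ F₂, p.1 ∪ p.2 ∈
      V.powerset.filter (fun S => S.card ≤ d₁ + d₂) := by
    rintro ⟨S, T⟩ hp
    rw [Finset.mem_product] at hp
    simp only [F₁, F₂, Finset.mem_filter, Finset.mem_powerset] at hp ⊢
    exact ⟨Finset.union_subset hp.1.1 hp.2.1,
      le_trans (Finset.card_union_le S T) (add_le_add hp.1.2 hp.2.2)⟩
  rw [← Finset.sum_product' (f := fun S T =>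
    (a S * (if S ⊆ A then (1:ℝ) else 0)) * (b T * (if T ⊆ A then (1:ℝ) else 0))),
    ← Finset.sum_fiberwise_of_maps_to hmaps]
  refine Finset.sum_congr rfl (fun U hU => ?_)
  rw [Finset.sum_mul]
  refine Finset.sum_congr rfl (fun p hp => ?_)
  rw [Finset.mem_filter] at hp
  have hU : p.1 ∪ p.2 = U := hp.2
  by_cases h1 : p.1 ⊆ A <;> by_cases h2 : p.2 ⊆ A
  · have : U ⊆ A := hU ▸ Finset.union_subset h1 h2
    simp only [h1, h2, this, if_true]; ring
  · have : ¬ U ⊆ A := fun h => h2 ((Finset.subset_union_right).trans (hU ▸ h : p.1 ∪ p.2 ⊆ A))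
    simp [h1, h2, this]
  · have : ¬ U ⊆ A := fun h => h1 ((Finset.subset_union_left).trans (hU ▸ h : p.1 ∪ p.2 ⊆ A))
    simp [h1, h2, this]
  · have : ¬ U ⊆ A := fun h => h1 ((Finset.subset_union_left).trans (hU ▸ h : p.1 ∪ p.2 ⊆ A))
    simp [h1, h2, this]

lemma degle_mono {V : Finset ι} {d d' : ℕ} {f : Finset ι → ℝ}
    (hd : d ≤ d') (hf : DegLE V d f) : DegLE V d' f := by
  obtain ⟨a, ha⟩ := hf
  refine ⟨fun S => if S.card ≤ d then a S else 0, fun A hA => ?_⟩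
  rw [ha A hA]
  have hsub : V.powerset.filter (fun S => S.card ≤ d) ⊆
      V.powerset.filter (fun S => S.card ≤ d') := by
    intro S hS
    rw [Finset.mem_filter] at hS ⊢
    exact ⟨hS.1, le_trans hS.2 hd⟩
  rw [← Finset.sum_subset hsub (fun S hS hS' => ?_)]
  · refine Finset.sum_congr rfl (fun S hS => ?_)
    rw [Finset.mem_filter] at hS
    simp [hS.2]
  · rw [Finset.mem_filter] at hS hS'
    have : ¬ S.card ≤ d := fun h => hS' ⟨hS.1, h⟩
    simp [this]

lemma degle_mul_const {V : Finset ι} {d : ℕ} {f : Finset ι → ℝ} (c : ℝ)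
    (hf : DegLE V d f) : DegLE V d (fun A => f A * c) := by
  have := degle_mul hf (degle_const V 0 c)
  exact degle_mono (by omega) this

lemma degle_prod {V : Finset ι} {S : Finset ι} {f : ι → Finset ι → ℝ}
    (hf : ∀ j ∈ S, DegLE V 1 (f j)) :
    DegLE V S.card (fun A => ∏ j ∈ S, f j A) := by
  classical
  induction S using Finset.cons_induction with
  | empty => simpa using degle_const V 0 1
  | cons j S hj ih =>
    have h1 : DegLE V 1 (f j) := hf j (Finset.mem_cons_self j S)
    have h2 := ih (fun i hi => hf i (Finset.mem_cons_of_mem hi))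
    have := degle_mul h1 h2
    refine degle_ext (degle_mono (le_of_eq ?_) this) (fun A hA => ?_)
    · rw [Finset.card_cons]; omega
    · rw [Finset.prod_cons]

lemma degle_sum {γ : Type} {V : Finset ι} {d : ℕ} (F : Finset γ)
    (f : γ → Finset ι → ℝ) (h : ∀ s ∈ F, DegLE V d (f s)) :
    DegLE V d (fun A => ∑ s ∈ F, f s A) := by
  classical
  induction F using Finset.cons_induction with
  | empty => simpa using degle_const V d 0
  | cons s F hs ih =>
      have h1 := h s (Finset.mem_cons_self s F)
      have h2 := ih (fun t ht => h t (Finset.mem_cons_of_mem ht))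
      refine degle_ext (degle_add h1 h2) (fun A hA => ?_)
      rw [Finset.sum_cons]
lemma sz_count {V : Finset ι} (d : ℕ) (g : Finset ι → ℝ)
    (hg : DegLE V d g) (hnz : ∃ A ∈ V.powerset, g A ≠ 0) :
    2 ^ V.card ≤ 2 ^ d * (V.powerset.filter (fun A => g A ≠ 0)).card := by
  classical
  induction V using Finset.induction_on generalizing d g with
  | empty =>
      obtain ⟨A, hA, hAnz⟩ := hnz
      have : (Finset.powerset (∅ : Finset ι)).filter (fun A => g A ≠ 0) = {∅} := by
        rw [Finset.powerset_empty]
        rw [Finset.mem_powerset, Finset.subset_empty] at hA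
        subst hA
        simp [Finset.filter_singleton, hAnz]
      rw [this]
      simp [Nat.one_le_two_pow]
  | @insert i V' hi ih =>
      obtain ⟨a, ha⟩ := hg
      set g0 : Finset ι → ℝ := fun A =>
        ∑ S ∈ V'.powerset.filter (fun S => S.card ≤ d),
          a S * (if S ⊆ A then (1:ℝ) else 0) with hg0
      set g1 : Finset ι → ℝ := fun A =>
        ∑ S ∈ V'.powerset.filter (fun S => S.card + 1 ≤ d),
          a (insert i S) * (if S ⊆ A then (1:ℝ) else 0) with hg1
      -- splitting of the representation
      have hsplit : ∀ A ∈ (insert i V').powerset, g A =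
          (∑ S ∈ V'.powerset.filter (fun S => S.card ≤ d),
            a S * (if S ⊆ A then (1:ℝ) else 0)) +
          (∑ S ∈ V'.powerset.filter (fun S => S.card + 1 ≤ d),
            a (insert i S) * (if insert i S ⊆ A then (1:ℝ) else 0)) := by
        intro A hA
        rw [ha A hA, Finset.powerset_insert, Finset.filter_union]
        have hdisj : Disjoint
            (V'.powerset.filter (fun S => S.card ≤ d))
            ((V'.powerset.image (insert i)).filter (fun S => S.card ≤ d)) := by
          rw [Finset.disjoint_left]
          intro S hS hS'
          rw [Finset.mem_filter, Finset.mem_powerset] at hS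
          rw [Finset.mem_filter, Finset.mem_image] at hS'
          obtain ⟨T, _, hT⟩ := hS'.1
          exact hi (hS.1 (hT ▸ Finset.mem_insert_self i T))
        rw [Finset.sum_union hdisj]
        congr 1
        rw [Finset.filter_image]
        rw [Finset.sum_image (fun S hS T hT hST => ?_)]
        · refine Finset.sum_congr (Finset.filter_congr fun S hS => ?_) fun S _ => rfl
          rw [Finset.mem_powerset] at hS
          rw [Finset.card_insert_of_notMem (fun h => hi (hS h))]
        · -- injectivity of insert i on powerset V'
          rw [Finset.mem_coe, Finset.mem_filter, Finset.mem_powerset] at hS hT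
          have hiS : i ∉ S := fun h => hi (hS.1 h)
          have hiT : i ∉ T := fun h => hi (hT.1 h)
          rw [← Finset.erase_insert hiS, ← Finset.erase_insert hiT, hST]
      have key1 : ∀ A ∈ V'.powerset, g A = g0 A := by
        intro A hA
        rw [Finset.mem_powerset] at hA
        have hiA : i ∉ A := fun h => hi (hA h)
        rw [hsplit A (Finset.mem_powerset.2 (hA.trans (Finset.subset_insert i V')))]
        have : ∀ S ∈ V'.powerset.filter (fun S => S.card + 1 ≤ d),
            a (insert i S) * (if insert i S ⊆ A then (1:ℝ) else 0) = 0 := by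
          intro S _
          have : ¬ insert i S ⊆ A := fun h => hiA (h (Finset.mem_insert_self i S))
          simp [this]
        rw [Finset.sum_congr rfl this]
        simp [hg0]
      have key2 : ∀ A ∈ V'.powerset, g (insert i A) = g0 A + g1 A := by
        intro A hA
        rw [Finset.mem_powerset] at hA
        have hiA : i ∉ A := fun h => hi (hA h)
        have hA' : insert i A ∈ (insert i V').powerset :=
          Finset.mem_powerset.2 (Finset.insert_subset_insert i hA)
        rw [hsplit _ hA']
        congr 1
        · refine Finset.sum_congr rfl fun S hS => ?_
          rw [Finset.mem_filter, Finset.mem_powerset] at hS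
          have hiS : i ∉ S := fun h => hi (hS.1 h)
          have : S ⊆ insert i A ↔ S ⊆ A := by
            constructor
            · intro h x hx
              rcases Finset.mem_insert.1 (h hx) with h' | h'
              · exact absurd (h' ▸ hx) hiS
              · exact h'
            · exact fun h => h.trans (Finset.subset_insert i A)
          simp only [this]
        · refine Finset.sum_congr rfl fun S hS => ?_
          rw [Finset.mem_filter, Finset.mem_powerset] at hS
          have hiS : i ∉ S := fun h => hi (hS.1 h)
          have : insert i S ⊆ insert i A ↔ S ⊆ A := by
            constructor
            · intro h x hx
              rcases Finset.mem_insert.1 (h (Finset.mem_insert_of_mem hx)) with h' | h'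
              · exact absurd (h' ▸ hx) hiS
              · exact h'
            · intro h
              exact Finset.insert_subset_insert i h
          simp only [this]
      set Ftot := (insert i V').powerset.filter (fun A => g A ≠ 0) with hFtot
      rw [Finset.card_insert_of_notMem hi, pow_succ, mul_comm (2 ^ V'.card) 2]
      by_cases hcase : ∀ A ∈ V'.powerset, g1 A = 0
      · -- g = g0 duplicated on both halves
        have hex : ∃ A ∈ V'.powerset, g0 A ≠ 0 := by
          obtain ⟨A₀, hA₀, hnz0⟩ := hnz
          rw [Finset.mem_powerset] at hA₀
          by_cases hiA : i ∈ A₀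
          · refine ⟨A₀.erase i, Finset.mem_powerset.2 ?_, ?_⟩
            · intro x hx
              rcases Finset.mem_insert.1 (hA₀ (Finset.mem_of_mem_erase hx)) with h | h
              · exact absurd h (Finset.ne_of_mem_erase hx)
              · exact h
            · have hmem : A₀.erase i ∈ V'.powerset := by
                rw [Finset.mem_powerset]
                intro x hx
                rcases Finset.mem_insert.1 (hA₀ (Finset.mem_of_mem_erase hx)) with h | h
                · exact absurd h (Finset.ne_of_mem_erase hx)
                · exact h
              have := key2 _ hmem
              rw [Finset.insert_erase hiA] at this
              rw [this, hcase _ hmem, add_zero] at hnz0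
              exact hnz0
          · have hmem : A₀ ∈ V'.powerset := by
              rw [Finset.mem_powerset]
              intro x hx
              rcases Finset.mem_insert.1 (hA₀ hx) with h | h
              · exact absurd (h ▸ hx) hiA
              · exact h
            exact ⟨A₀, hmem, (key1 _ hmem) ▸ hnz0⟩
        have hdeg : DegLE V' d g0 := ⟨a, fun A _ => rfl⟩
        have hih := ih d g0 hdeg hex
        set F0 := V'.powerset.filter (fun A => g0 A ≠ 0) with hF0
        have hiF0 : ∀ A ∈ F0, i ∉ A := by
          intro A hA
          rw [hF0, Finset.mem_filter, Finset.mem_powerset] at hA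
          exact fun h => hi (hA.1 h)
        have hsub : F0 ∪ F0.image (insert i) ⊆ Ftot := by
          intro A hA
          rcases Finset.mem_union.1 hA with h | h
          · have hm := h
            rw [hF0, Finset.mem_filter, Finset.mem_powerset] at hm
            rw [hFtot, Finset.mem_filter, Finset.mem_powerset]
            refine ⟨hm.1.trans (Finset.subset_insert i V'), ?_⟩
            rw [key1 A (Finset.mem_powerset.2 hm.1)]
            exact hm.2
          · rw [Finset.mem_image] at h
            obtain ⟨B, hB, rfl⟩ := h
            have hm := hB
            rw [hF0, Finset.mem_filter] at hm
            rw [hFtot, Finset.mem_filter, Finset.mem_powerset]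
            refine ⟨Finset.insert_subset_insert i (Finset.mem_powerset.1 hm.1), ?_⟩
            rw [key2 B hm.1, hcase B hm.1, add_zero]
            exact hm.2
        have hdisj2 : Disjoint F0 (F0.image (insert i)) := by
          rw [Finset.disjoint_left]
          intro A hA hA'
          rw [Finset.mem_image] at hA'
          obtain ⟨B, _, hB⟩ := hA'
          exact (hiF0 A hA) (hB ▸ Finset.mem_insert_self i B)
        have hinj : Set.InjOn (insert i) (F0 : Set (Finset ι)) := by
          intro A hA B hB hAB
          rw [Finset.mem_coe] at hA hB
          rw [← Finset.erase_insert (hiF0 A hA), ← Finset.erase_insert (hiF0 B hB), hAB]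
        have hcard : (F0 ∪ F0.image (insert i)).card = 2 * F0.card := by
          rw [Finset.card_union_of_disjoint hdisj2, Finset.card_image_of_injOn hinj]
          ring
        calc 2 * 2 ^ V'.card ≤ 2 * (2 ^ d * F0.card) := Nat.mul_le_mul_left 2 hih
          _ = 2 ^ d * (F0 ∪ F0.image (insert i)).card := by rw [hcard]; ring
          _ ≤ 2 ^ d * Ftot.card := Nat.mul_le_mul_left _ (Finset.card_le_card hsub)
      · push_neg at hcase
        obtain ⟨A₁, hA₁, hnz1⟩ := hcase
        have hd : 1 ≤ d := by
          by_contra hd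
          have hd0 : d = 0 := by omega
          have : V'.powerset.filter (fun S => S.card + 1 ≤ d) = ∅ := by
            rw [Finset.filter_eq_empty_iff]
            intro S _
            omega
          rw [hg1] at hnz1
          simp only [this, Finset.sum_empty] at hnz1
          exact hnz1 rfl
        have hdeg : DegLE V' (d - 1) g1 := by
          refine ⟨fun S => a (insert i S), fun A _ => ?_⟩
          rw [hg1]
          refine Finset.sum_congr (Finset.filter_congr fun S _ => ?_) fun S _ => rfl
          omega
        have hih := ih (d - 1) g1 hdeg ⟨A₁, hA₁, hnz1⟩
        set F1 := V'.powerset.filter (fun A => g1 A ≠ 0) with hF1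
        have hmapsto : ∀ A ∈ F1,
            (if g A ≠ 0 then A else insert i A) ∈ Ftot := by
          intro A hA
          rw [hF1, Finset.mem_filter] at hA
          by_cases hgA : g A ≠ 0
          · rw [if_pos hgA, hFtot, Finset.mem_filter, Finset.mem_powerset]
            exact ⟨(Finset.mem_powerset.1 hA.1).trans (Finset.subset_insert i V'), hgA⟩
          · rw [if_neg hgA, hFtot, Finset.mem_filter, Finset.mem_powerset]
            refine ⟨Finset.insert_subset_insert i (Finset.mem_powerset.1 hA.1), ?_⟩
            push_neg at hgA
            rw [key2 A hA.1]
            rw [key1 A hA.1] at hgA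
            rw [hgA, zero_add]
            exact hA.2
        have hinj : ∀ A ∈ F1, ∀ B ∈ F1,
            (if g A ≠ 0 then A else insert i A) = (if g B ≠ 0 then B else insert i B) →
            A = B := by
          intro A hA B hB hAB
          have hiA : i ∉ A := by
            rw [hF1, Finset.mem_filter, Finset.mem_powerset] at hA
            exact fun h => hi (hA.1 h)
          have hiB : i ∉ B := by
            rw [hF1, Finset.mem_filter, Finset.mem_powerset] at hB
            exact fun h => hi (hB.1 h)
          have heA : (if g A ≠ 0 then A else insert i A).erase i = A := by
            by_cases h : g A ≠ 0
            · rw [if_pos h, Finset.erase_eq_of_notMem hiA]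
            · rw [if_neg h, Finset.erase_insert hiA]
          have heB : (if g B ≠ 0 then B else insert i B).erase i = B := by
            by_cases h : g B ≠ 0
            · rw [if_pos h, Finset.erase_eq_of_notMem hiB]
            · rw [if_neg h, Finset.erase_insert hiB]
          rw [← heA, ← heB, hAB]
        have hinj' : Set.InjOn (fun A => if g A ≠ 0 then A else insert i A) (F1 : Set (Finset ι)) := by
          intro A hA B hB hAB
          rw [Finset.mem_coe] at hA hB
          exact hinj A hA B hB hAB
        have hc := Finset.card_le_card_of_injOn _ hmapsto hinj'
        calc 2 * 2 ^ V'.card ≤ 2 * (2 ^ (d - 1) * F1.card) := Nat.mul_le_mul_left 2 hih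
          _ = 2 ^ d * F1.card := by
              rw [← mul_assoc, mul_comm 2 (2 ^ (d - 1)), ← pow_succ]
              congr 2
              omega
          _ ≤ 2 ^ d * Ftot.card := Nat.mul_le_mul_left _ hc

end DegLEStuff

section Glue
variable {α β : Type} [Fintype α] [Fintype β]

lemma glue_equiv (p : α → Prop) (q : β → Prop) [DecidablePred p] [DecidablePred q]
    (e₁ : {a // p a} ≃ {b // q b}) (e₂ : {a // ¬ p a} ≃ {b // ¬ q b}) :
    ∃ π : α ≃ β, ∀ a, q (π a) ↔ p a := by
  refine ⟨(Equiv.sumCompl p).symm.trans ((e₁.sumCongr e₂).trans (Equiv.sumCompl q)), fun a => ?_⟩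
  by_cases h : p a
  · simp only [Equiv.trans_apply, Equiv.sumCompl_symm_apply_of_pos h,
      Equiv.sumCongr_apply, Sum.map_inl, Equiv.sumCompl_apply_inl]
    exact iff_of_true (e₁ ⟨a, h⟩).2 h
  · simp only [Equiv.trans_apply, Equiv.sumCompl_symm_apply_of_neg h,
      Equiv.sumCongr_apply, Sum.map_inr, Equiv.sumCompl_apply_inr]
    exact iff_of_false (e₂ ⟨a, h⟩).2 h

end Glue

section Cards
variable {α : Type} [Fintype α] [DecidableEq α]

lemma card_sub_mem (s Z : Finset α) (h : Z ⊆ s) :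
    Fintype.card {b : {a // a ∈ s} // (b : α) ∈ Z} = Z.card := by
  have e : {b : {a // a ∈ s} // (b : α) ∈ Z} ≃ {a : α // a ∈ s ∧ a ∈ Z} :=
    Equiv.subtypeSubtypeEquivSubtypeInter (fun a => a ∈ s) (fun a => a ∈ Z)
  rw [Fintype.card_congr e]
  have e2 : {a : α // a ∈ s ∧ a ∈ Z} ≃ {a : α // a ∈ Z} :=
    Equiv.subtypeEquivRight (fun a => ⟨fun ha => ha.2, fun ha => ⟨h ha, ha⟩⟩)
  rw [Fintype.card_congr e2, Fintype.card_coe]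

lemma card_sub_not_mem (s Z : Finset α) (h : Z ⊆ s) :
    Fintype.card {b : {a // a ∈ s} // (b : α) ∉ Z} = s.card - Z.card := by
  have := Fintype.card_subtype_compl (fun b : {a // a ∈ s} => (b : α) ∈ Z)
  rw [this, card_sub_mem s Z h, Fintype.card_coe]

end Cards

section Zof
variable {n : ℕ} (x : Finset (Fin n))

/-- The replacement set: given a bijection `π` between `x` and its complement
and a "kept" set `K ⊆ x`, this is the image under `π` of `x \ K`. -/
noncomputable def Zof (π : {i // i ∈ x} ≃ {i // i ∈ xᶜ}) (K : Finset (Fin n)) :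
    Finset (Fin n) :=
  (Finset.univ.filter (fun b : {i // i ∈ xᶜ} => ((π.symm b : {i // i ∈ x}) : Fin n) ∉ K)).image
    Subtype.val

variable (π : {i // i ∈ x} ≃ {i // i ∈ xᶜ}) (K : Finset (Fin n))

lemma mem_Zof {j : Fin n} :
    j ∈ Zof x π K ↔ ∃ h : j ∈ xᶜ, ((π.symm ⟨j, h⟩ : {i // i ∈ x}) : Fin n) ∉ K := by
  simp only [Zof, Finset.mem_image, Finset.mem_filter, Finset.mem_univ, true_and]
  constructor
  · rintro ⟨b, hb, rfl⟩
    exact ⟨b.2, by simpa using hb⟩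
  · rintro ⟨h, hj⟩
    exact ⟨⟨j, h⟩, hj, rfl⟩

lemma mem_Zof' (b : {i // i ∈ xᶜ}) :
    (b : Fin n) ∈ Zof x π K ↔ ((π.symm b : {i // i ∈ x}) : Fin n) ∉ K := by
  rw [mem_Zof]
  constructor
  · rintro ⟨h, hj⟩
    convert hj using 3
  · intro h
    exact ⟨b.2, by convert h using 3⟩

lemma Zof_subset : Zof x π K ⊆ xᶜ := by
  intro j hj
  rw [mem_Zof] at hj
  exact hj.1

lemma Zof_card (hK : K ⊆ x) : (Zof x π K).card = x.card - K.card := by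
  rw [Zof, Finset.card_image_of_injective _ Subtype.val_injective,
    ← Fintype.card_subtype]
  have e : {b : {i // i ∈ xᶜ} // ((π.symm b : {i // i ∈ x}) : Fin n) ∉ K} ≃
      {i : {i // i ∈ x} // (i : Fin n) ∉ K} :=
    Equiv.subtypeEquiv π.symm (fun b => Iff.rfl)
  rw [Fintype.card_congr e, card_sub_not_mem x K hK]

lemma Zof_disjoint (hK : K ⊆ x) : Disjoint K (Zof x π K) :=
  Finset.disjoint_left.2 fun j hjK hjZ =>
    (Finset.mem_compl.1 (Zof_subset x π K hjZ)) (hK hjK)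

lemma Zof_top : Zof x π x = ∅ := by
  rw [Finset.eq_empty_iff_forall_notMem]
  intro j hj
  rw [mem_Zof] at hj
  obtain ⟨h, hj⟩ := hj
  exact hj (π.symm ⟨j, h⟩).2

end Zof

section Fibers
variable {n : ℕ} (x : Finset (Fin n))

lemma fiber_move (π : {i // i ∈ x} ≃ {i // i ∈ xᶜ}) (K : Finset (Fin n))
    (σ : Equiv.Perm {i // i ∈ xᶜ}) {Z Z' : Finset (Fin n)}
    (hσ : ∀ b, ((σ b : {i // i ∈ xᶜ}) : Fin n) ∈ Z' ↔ (b : Fin n) ∈ Z)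
    (hZ' : Z' ⊆ xᶜ) (hπ : Zof x π K = Z) :
    Zof x (π.trans σ) K = Z' := by
  ext j
  rw [mem_Zof]
  constructor
  · rintro ⟨h, hj⟩
    have h1 : ((π.trans σ).symm ⟨j, h⟩) = π.symm (σ.symm ⟨j, h⟩) := rfl
    rw [h1] at hj
    have h2 : ((σ.symm ⟨j, h⟩ : {i // i ∈ xᶜ}) : Fin n) ∈ Zof x π K :=
      (mem_Zof' x π K _).2 hj
    rw [hπ] at h2
    have h3 := (hσ (σ.symm ⟨j, h⟩)).2 h2
    rwa [Equiv.apply_symm_apply] at h3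
  · intro hj
    have h : j ∈ xᶜ := hZ' hj
    refine ⟨h, ?_⟩
    have h3 : ((σ.symm ⟨j, h⟩ : {i // i ∈ xᶜ}) : Fin n) ∈ Z := by
      have := (hσ (σ.symm ⟨j, h⟩))
      rw [Equiv.apply_symm_apply] at this
      exact this.1 hj
    rw [← hπ] at h3
    have h4 := (mem_Zof' x π K _).1 h3
    exact h4

lemma fiber_card_eq (K : Finset (Fin n)) {c : ℕ} {Z Z' : Finset (Fin n)}
    (hZ : Z ∈ Finset.powersetCard c xᶜ) (hZ' : Z' ∈ Finset.powersetCard c xᶜ) :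
    (Finset.univ.filter (fun π : {i // i ∈ x} ≃ {i // i ∈ xᶜ} => Zof x π K = Z)).card =
    (Finset.univ.filter (fun π : {i // i ∈ x} ≃ {i // i ∈ xᶜ} => Zof x π K = Z')).card := by
  rw [Finset.mem_powersetCard] at hZ hZ'
  obtain ⟨hZs, hZc⟩ := hZ
  obtain ⟨hZs', hZc'⟩ := hZ'
  -- build σ : Perm ↥xᶜ moving Z to Z'
  have e₁ : {b : {i // i ∈ xᶜ} // (b : Fin n) ∈ Z} ≃ {b : {i // i ∈ xᶜ} // (b : Fin n) ∈ Z'} :=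
    Fintype.equivOfCardEq (by rw [card_sub_mem _ _ hZs, card_sub_mem _ _ hZs', hZc, hZc'])
  have e₂ : {b : {i // i ∈ xᶜ} // ¬ (b : Fin n) ∈ Z} ≃ {b : {i // i ∈ xᶜ} // ¬ (b : Fin n) ∈ Z'} :=
    Fintype.equivOfCardEq (by
      rw [card_sub_not_mem _ _ hZs, card_sub_not_mem _ _ hZs', hZc, hZc'])
  obtain ⟨σ, hσ⟩ := glue_equiv (fun b : {i // i ∈ xᶜ} => (b : Fin n) ∈ Z)
    (fun b : {i // i ∈ xᶜ} => (b : Fin n) ∈ Z') e₁ e₂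
  have hσ' : ∀ b, ((σ.symm b : {i // i ∈ xᶜ}) : Fin n) ∈ Z ↔ (b : Fin n) ∈ Z' := by
    intro b
    have := hσ (σ.symm b)
    rw [Equiv.apply_symm_apply] at this
    exact this.symm
  refine Finset.card_bij' (fun π _ => π.trans σ) (fun π _ => π.trans σ.symm) ?_ ?_ ?_ ?_
  · intro π hπ
    rw [Finset.mem_filter] at hπ ⊢
    exact ⟨Finset.mem_univ _, fiber_move x π K σ hσ hZs' hπ.2⟩
  · intro π hπ
    rw [Finset.mem_filter] at hπ ⊢
    exact ⟨Finset.mem_univ _, fiber_move x π K σ.symm hσ' hZs hπ.2⟩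
  · intro π _
    ext i
    simp
  · intro π _
    ext i
    simp

lemma image_Zof (K : Finset (Fin n)) (hK : K ⊆ x) (hxc : xᶜ.card = x.card) :
    (Finset.univ.image (fun π : {i // i ∈ x} ≃ {i // i ∈ xᶜ} => Zof x π K)) =
      Finset.powersetCard (x.card - K.card) xᶜ := by
  have hk : K.card ≤ x.card := Finset.card_le_card hK
  apply Finset.Subset.antisymm
  · intro Z hZ
    rw [Finset.mem_image] at hZ
    obtain ⟨π, _, rfl⟩ := hZ
    rw [Finset.mem_powersetCard]
    exact ⟨Zof_subset x π K, Zof_card x π K hK⟩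
  · intro Z hZ
    rw [Finset.mem_powersetCard] at hZ
    obtain ⟨hZs, hZc⟩ := hZ
    have e₁ : {i : {i // i ∈ x} // (i : Fin n) ∈ K} ≃ {b : {i // i ∈ xᶜ} // ¬ (b : Fin n) ∈ Z} :=
      Fintype.equivOfCardEq (by
        rw [card_sub_mem _ _ hK, card_sub_not_mem _ _ hZs, hZc, hxc]
        omega)
    have e₂ : {i : {i // i ∈ x} // ¬ (i : Fin n) ∈ K} ≃
        {b : {i // i ∈ xᶜ} // ¬ ¬ (b : Fin n) ∈ Z} := by
      refine Fintype.equivOfCardEq ?_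
      have h1 := Fintype.card_subtype_compl (fun b : {i // i ∈ xᶜ} => ¬ (b : Fin n) ∈ Z)
      rw [h1, card_sub_not_mem _ _ hZs, card_sub_not_mem _ _ hK, Fintype.card_coe, hZc, hxc]
      omega
    obtain ⟨π, hπ⟩ := glue_equiv (fun i : {i // i ∈ x} => (i : Fin n) ∈ K)
      (fun b : {i // i ∈ xᶜ} => ¬ (b : Fin n) ∈ Z) e₁ e₂
    rw [Finset.mem_image]
    refine ⟨π, Finset.mem_univ _, ?_⟩
    ext j
    rw [mem_Zof]
    constructor
    · rintro ⟨h, hj⟩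
      have := (hπ (π.symm ⟨j, h⟩))
      rw [Equiv.apply_symm_apply] at this
      have h2 : ¬ ¬ ((⟨j, h⟩ : {i // i ∈ xᶜ}) : Fin n) ∈ Z := fun hc => hj (this.1 hc)
      exact not_not.1 h2
    · intro hj
      have h : j ∈ xᶜ := hZs hj
      refine ⟨h, fun hc => ?_⟩
      have := (hπ (π.symm ⟨j, h⟩))
      rw [Equiv.apply_symm_apply] at this
      exact (this.2 hc) hj

lemma sum_Zof (K : Finset (Fin n)) (hK : K ⊆ x) (hxc : xᶜ.card = x.card)
    (h : Finset (Fin n) → ℝ) :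
    ((x.card.choose (x.card - K.card) : ℝ)) *
      ∑ π : {i // i ∈ x} ≃ {i // i ∈ xᶜ}, h (Zof x π K)
    = ((x.card.factorial : ℝ)) *
      ∑ Z ∈ Finset.powersetCard (x.card - K.card) xᶜ, h Z := by
  classical
  have hcomp := Finset.sum_comp (s := (Finset.univ : Finset ({i // i ∈ x} ≃ {i // i ∈ xᶜ})))
    h (fun π => Zof x π K)
  rw [image_Zof x K hK hxc] at hcomp
  rw [hcomp]
  rw [Finset.mul_sum, Finset.mul_sum]
  refine Finset.sum_congr rfl (fun Z hZ => ?_)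
  rw [nsmul_eq_mul, ← mul_assoc]
  congr 1
  -- (choose) * fiber = m!
  have hconst : ∀ Z' ∈ Finset.powersetCard (x.card - K.card) xᶜ,
      (Finset.univ.filter (fun π : {i // i ∈ x} ≃ {i // i ∈ xᶜ} => Zof x π K = Z')).card =
      (Finset.univ.filter (fun π : {i // i ∈ x} ≃ {i // i ∈ xᶜ} => Zof x π K = Z)).card :=
    fun Z' hZ' => fiber_card_eq x K hZ' hZ
  have htot : (Finset.univ : Finset ({i // i ∈ x} ≃ {i // i ∈ xᶜ})).card =
      ∑ Z' ∈ Finset.powersetCard (x.card - K.card) xᶜ,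
        (Finset.univ.filter (fun π : {i // i ∈ x} ≃ {i // i ∈ xᶜ} => Zof x π K = Z')).card := by
    apply Finset.card_eq_sum_card_fiberwise
    intro π _
    rw [Finset.mem_coe, Finset.mem_powersetCard]
    exact ⟨Zof_subset x π K, Zof_card x π K hK⟩
  have hex : Nonempty ({i // i ∈ x} ≃ {i // i ∈ xᶜ}) :=
    ⟨Fintype.equivOfCardEq (by rw [Fintype.card_coe, Fintype.card_coe, hxc])⟩
  have hcard : (Finset.univ : Finset ({i // i ∈ x} ≃ {i // i ∈ xᶜ})).card =
      x.card.factorial := by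
    rw [Finset.card_univ, Fintype.card_equiv hex.some, Fintype.card_coe]
  rw [Finset.sum_congr rfl hconst, Finset.sum_const, Finset.card_powersetCard, hxc] at htot
  rw [hcard] at htot
  rw [smul_eq_mul] at htot
  have : ((x.card.choose (x.card - K.card) : ℕ) : ℝ) *
      ((Finset.univ.filter (fun π : {i // i ∈ x} ≃ {i // i ∈ xᶜ} => Zof x π K = Z)).card : ℝ)
      = (x.card.factorial : ℝ) := by
    rw [← Nat.cast_mul, ← htot]
  exact this

end Fibers

section RowBound
variable {n : ℕ}

lemma went_val (x y : Finset (Fin n)) (hx : x.card = n / 2) (hy : y.card = n / 2) :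
    Went n x y = 1 / (2 ^ (n / 2) * ((n / 2).choose (n / 2 - (x ∩ y).card))) := by
  have hd : Disjoint (x \ y) (y \ x) := disjoint_sdiff_sdiff
  have h1 : (symmDiff x y).card = (x \ y).card + (y \ x).card := by
    rw [symmDiff_def]
    exact Finset.card_union_of_disjoint hd
  have h2 : (x ∩ y).card + (x \ y).card = x.card := Finset.card_inter_add_card_sdiff x y
  have h3 : (y ∩ x).card + (y \ x).card = y.card := Finset.card_inter_add_card_sdiff y x
  have h4 : (x ∩ y) = (y ∩ x) := Finset.inter_comm x y
  have h4c : (x ∩ y).card = (y ∩ x).card := by rw [h4]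
  have h5 : (symmDiff x y).card / 2 = n / 2 - (x ∩ y).card := by
    rw [h1]
    omega
  rw [Went, h5]

lemma degle_chi (x : Finset (Fin n)) (π : {i // i ∈ x} ≃ {i // i ∈ xᶜ}) (j : Fin n) :
    DegLE x 1 (fun K => if j ∈ K ∪ Zof x π K then (1:ℝ) else 0) := by
  by_cases hj : j ∈ x
  · refine degle_ext (degle_ind hj) (fun K hK => ?_)
    rw [Finset.mem_powerset] at hK
    have : j ∈ K ∪ Zof x π K ↔ j ∈ K := by
      rw [Finset.mem_union]
      constructor
      · rintro (h | h)
        · exact h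
        · exact absurd (Finset.mem_compl.1 (Zof_subset x π K h)) (fun hc => hc hj)
      · exact Or.inl
    simp only [this]
  · have hj' : j ∈ xᶜ := Finset.mem_compl.2 hj
    have hi0 : ((π.symm ⟨j, hj'⟩ : {i // i ∈ x}) : Fin n) ∈ x := (π.symm ⟨j, hj'⟩).2
    have base : DegLE x 1 (fun K =>
        (fun _ => (1:ℝ)) K + (fun K => (if ((π.symm ⟨j, hj'⟩ : {i // i ∈ x}) : Fin n) ∈ K
          then (1:ℝ) else 0) * (-1)) K) :=
      degle_add (degle_const x 1 1) (degle_mul_const (-1) (degle_ind hi0))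
    refine degle_ext base (fun K hK => ?_)
    rw [Finset.mem_powerset] at hK
    have hjK : j ∉ K := fun h => hj (hK h)
    have hmem : j ∈ K ∪ Zof x π K ↔ ((π.symm ⟨j, hj'⟩ : {i // i ∈ x}) : Fin n) ∉ K := by
      rw [Finset.mem_union]
      constructor
      · rintro (h | h)
        · exact absurd h hjK
        · exact (mem_Zof' x π K ⟨j, hj'⟩).1 h
      · intro h
        exact Or.inr ((mem_Zof' x π K ⟨j, hj'⟩).2 h)
    by_cases hcase : ((π.symm ⟨j, hj'⟩ : {i // i ∈ x}) : Fin n) ∈ K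
    · have : j ∉ K ∪ Zof x π K := fun h => (hmem.1 h) hcase
      simp [hcase, this]
    · have : j ∈ K ∪ Zof x π K := hmem.2 hcase
      simp [hcase, this]

lemma degle_P (x : Finset (Fin n)) (π : {i // i ∈ x} ≃ {i // i ∈ xᶜ}) (d : ℕ)
    (P : Finset (Fin n) → ℝ) (a : Finset (Fin n) → ℝ)
    (hP : ∀ A : Finset (Fin n), A.card = n / 2 →
      P A = ∑ S ∈ Finset.univ.filter (fun S : Finset (Fin n) => S.card ≤ d),
        (∏ i ∈ S, if i ∈ A then (1 : ℝ) else 0) * a S)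
    (hcard : ∀ K ∈ x.powerset, (K ∪ Zof x π K).card = n / 2) :
    DegLE x d (fun K => P (K ∪ Zof x π K)) := by
  have hsum : DegLE x d (fun K =>
      ∑ S ∈ Finset.univ.filter (fun S : Finset (Fin n) => S.card ≤ d),
        (fun S K => (∏ i ∈ S, if i ∈ K ∪ Zof x π K then (1 : ℝ) else 0) * a S) S K) := by
    apply degle_sum
    intro S hS
    rw [Finset.mem_filter] at hS
    have hprod : DegLE x S.card (fun K => ∏ i ∈ S, (fun j K =>
        if j ∈ K ∪ Zof x π K then (1:ℝ) else 0) i K) :=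
      degle_prod (fun j _ => degle_chi x π j)
    exact degle_mul_const (a S) (degle_mono hS.2 hprod)
  refine degle_ext hsum (fun K hK => ?_)
  exact (hP _ (hcard K hK)).symm

lemma row_bound (hn : Even n) (d : ℕ) (P : Finset (Fin n) → ℝ)
    (a : Finset (Fin n) → ℝ)
    (hP : ∀ A : Finset (Fin n), A.card = n / 2 →
      P A = ∑ S ∈ Finset.univ.filter (fun S : Finset (Fin n) => S.card ≤ d),
        (∏ i ∈ S, if i ∈ A then (1 : ℝ) else 0) * a S)
    (x : Finset (Fin n)) (hx : x.card = n / 2) (hPx : P x ≠ 0) :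
    (1:ℝ) / 2 ^ d ≤ ∑ y ∈ Finset.univ.filter
      (fun A : Finset (Fin n) => A.card = n / 2 ∧ P A ≠ 0), Went n x y := by
  classical
  set m := n / 2 with hm
  have hnm : n = m + m := by
    obtain ⟨r, hr⟩ := hn
    omega
  have hxc : xᶜ.card = x.card := by
    rw [Finset.card_compl, Fintype.card_fin, hx]
    omega
  have hunion_card : ∀ (π : {i // i ∈ x} ≃ {i // i ∈ xᶜ}), ∀ K ∈ x.powerset,
      (K ∪ Zof x π K).card = m := by
    intro π K hK
    rw [Finset.mem_powerset] at hK
    have hk : K.card ≤ m := hx ▸ Finset.card_le_card hK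
    rw [Finset.card_union_of_disjoint (Zof_disjoint x π K hK), Zof_card x π K hK, hx]
    omega
  -- Step 1: rewrite the sum over T as a sigma sum over (K, Z)
  have h1 : ∑ y ∈ Finset.univ.filter
        (fun A : Finset (Fin n) => A.card = m ∧ P A ≠ 0), Went n x y
      = ∑ y ∈ Finset.univ.filter (fun A : Finset (Fin n) => A.card = m),
          (if P y ≠ 0 then Went n x y else 0) := by
    rw [← Finset.filter_filter, Finset.sum_filter]
  have h2 : ∑ y ∈ Finset.univ.filter (fun A : Finset (Fin n) => A.card = m),
        (if P y ≠ 0 then Went n x y else 0)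
      = ∑ p ∈ x.powerset.sigma (fun K => Finset.powersetCard (m - K.card) xᶜ),
          (if P (p.1 ∪ p.2) ≠ 0 then (1:ℝ) else 0) *
            (1 / (2 ^ m * (m.choose (m - p.1.card)))) := by
    refine Finset.sum_nbij' (fun y => ⟨x ∩ y, y \ x⟩) (fun p => p.1 ∪ p.2) ?_ ?_ ?_ ?_ ?_
    · intro y hy
      rw [Finset.mem_filter] at hy
      rw [Finset.mem_sigma, Finset.mem_powerset, Finset.mem_powersetCard]
      dsimp only
      refine ⟨Finset.inter_subset_left, fun j hj => ?_, ?_⟩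
      · rw [Finset.mem_sdiff] at hj
        exact Finset.mem_compl.2 hj.2
      · have h3 := Finset.card_inter_add_card_sdiff y x
        rw [Finset.inter_comm y x] at h3
        omega
    · intro p hp
      rw [Finset.mem_sigma, Finset.mem_powerset, Finset.mem_powersetCard] at hp
      rw [Finset.mem_filter]
      refine ⟨Finset.mem_univ _, ?_⟩
      have hdisj : Disjoint p.1 p.2 := by
        rw [Finset.disjoint_left]
        intro j hj1 hj2
        exact (Finset.mem_compl.1 (hp.2.1 hj2)) (hp.1 hj1)
      have hk : p.1.card ≤ m := hx ▸ Finset.card_le_card hp.1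
      rw [Finset.card_union_of_disjoint hdisj, hp.2.2]
      omega
    · intro y hy
      dsimp only
      rw [Finset.mem_filter] at hy
      have : x ∩ y ∪ y \ x = y := by
        ext j
        simp only [Finset.mem_union, Finset.mem_inter, Finset.mem_sdiff]
        by_cases hjx : j ∈ x <;> by_cases hjy : j ∈ y <;> simp [hjx, hjy]
      simp only [this]
    · intro p hp
      rw [Finset.mem_sigma, Finset.mem_powerset, Finset.mem_powersetCard] at hp
      have e1 : x ∩ (p.1 ∪ p.2) = p.1 := by
        ext j
        simp only [Finset.mem_inter, Finset.mem_union]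
        constructor
        · rintro ⟨hjx, hj | hj⟩
          · exact hj
          · exact absurd hjx (Finset.mem_compl.1 (hp.2.1 hj))
        · intro hj
          exact ⟨hp.1 hj, Or.inl hj⟩
      have e2 : (p.1 ∪ p.2) \ x = p.2 := by
        ext j
        simp only [Finset.mem_sdiff, Finset.mem_union]
        constructor
        · rintro ⟨hj | hj, hjx⟩
          · exact absurd (hp.1 hj) hjx
          · exact hj
        · intro hj
          exact ⟨Or.inr hj, Finset.mem_compl.1 (hp.2.1 hj)⟩
      obtain ⟨K, Z⟩ := p
      dsimp only at e1 e2 ⊢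
      rw [e1, e2]
    · intro y hy
      dsimp only
      rw [Finset.mem_filter] at hy
      have hw := went_val x y hx hy.2
      rw [← hm] at hw
      have hsub : x ∩ y ∪ y \ x = y := by
        ext j
        simp only [Finset.mem_union, Finset.mem_inter, Finset.mem_sdiff]
        by_cases hjx : j ∈ x <;> by_cases hjy : j ∈ y <;> simp [hjx, hjy]
      simp only [hsub, hw]
      by_cases hPy : P y ≠ 0 <;> simp [hPy]
  rw [h1, h2, ← Finset.sum_sigma' x.powerset
    (fun K => Finset.powersetCard (m - K.card) xᶜ)
    (fun K Z => (if P (K ∪ Z) ≠ 0 then (1:ℝ) else 0) *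
      (1 / (2 ^ m * (m.choose (m - K.card)))))]
  -- Step 2: per-K switch to a sum over bijections
  have hperK : ∀ K ∈ x.powerset,
      ∑ Z ∈ Finset.powersetCard (m - K.card) xᶜ,
        (if P (K ∪ Z) ≠ 0 then (1:ℝ) else 0) * (1 / (2 ^ m * (m.choose (m - K.card))))
      = (1 / (2 ^ m * (m.factorial : ℝ))) *
          ∑ π : {i // i ∈ x} ≃ {i // i ∈ xᶜ},
            (if P (K ∪ Zof x π K) ≠ 0 then (1:ℝ) else 0) := by
    intro K hK
    rw [Finset.mem_powerset] at hK
    have hkey := sum_Zof x K hK hxc (fun Z => if P (K ∪ Z) ≠ 0 then (1:ℝ) else 0)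
    rw [hx] at hkey
    have hk : K.card ≤ m := hx ▸ Finset.card_le_card hK
    have hC : (0:ℝ) < (m.choose (m - K.card) : ℝ) := by
      have := Nat.choose_pos (n := m) (k := m - K.card) (by omega)
      exact_mod_cast this
    have hF : (0:ℝ) < (m.factorial : ℝ) := by
      exact_mod_cast Nat.factorial_pos m
    have hCne : ((m.choose (m - K.card) : ℕ) : ℝ) ≠ 0 := ne_of_gt hC
    have hFne : ((m.factorial : ℕ) : ℝ) ≠ 0 := ne_of_gt hF
    have h2pow : (0:ℝ) < 2 ^ m := by positivity
    have hs : ∑ Z ∈ Finset.powersetCard (m - K.card) xᶜ,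
        (if P (K ∪ Z) ≠ 0 then (1:ℝ) else 0)
        = ((m.choose (m - K.card) : ℝ)) *
            (∑ π : {i // i ∈ x} ≃ {i // i ∈ xᶜ},
              (if P (K ∪ Zof x π K) ≠ 0 then (1:ℝ) else 0)) / (m.factorial : ℝ) := by
      rw [eq_div_iff hFne]
      linarith [hkey]
    rw [← Finset.sum_mul, hs]
    have hT : ((2:ℝ) ^ m) ≠ 0 := by positivity
    have hgen : ∀ S C F T : ℝ, C ≠ 0 → F ≠ 0 → T ≠ 0 →
        (C * S / F) * (1 / (T * C)) = (1 / (T * F)) * S := by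
      intro S C F T hC hF hT
      field_simp
    exact hgen _ _ _ _ hCne hFne hT
  rw [Finset.sum_congr rfl hperK]
  rw [← Finset.mul_sum]
  -- Step 3: swap sums, apply Schwartz-Zippel per π
  rw [Finset.sum_comm]
  have hperπ : ∀ π ∈ (Finset.univ : Finset ({i // i ∈ x} ≃ {i // i ∈ xᶜ})),
      (2:ℝ) ^ m / 2 ^ d ≤
        ∑ K ∈ x.powerset, (if P (K ∪ Zof x π K) ≠ 0 then (1:ℝ) else 0) := by
    intro π _
    rw [Finset.sum_boole]
    have hdeg : DegLE x d (fun K => P (K ∪ Zof x π K)) :=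
      degle_P x π d P a hP (fun K hK => hunion_card π K hK)
    have hnz : ∃ A ∈ x.powerset, P (A ∪ Zof x π A) ≠ 0 := by
      refine ⟨x, Finset.mem_powerset_self x, ?_⟩
      rw [Zof_top, Finset.union_empty]
      exact hPx
    have hsz := sz_count d _ hdeg hnz
    rw [hx] at hsz
    have hszr : (2:ℝ) ^ m ≤ 2 ^ d *
        ((x.powerset.filter (fun A => P (A ∪ Zof x π A) ≠ 0)).card : ℝ) := by
      exact_mod_cast hsz
    rw [div_le_iff₀ (by positivity)]
    calc (2:ℝ)^m ≤ 2 ^ d * _ := hszr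
      _ = _ * 2 ^ d := by ring
  have htot : ((m.factorial : ℝ)) * ((2:ℝ) ^ m / 2 ^ d) ≤
      ∑ π : {i // i ∈ x} ≃ {i // i ∈ xᶜ},
        ∑ K ∈ x.powerset, (if P (K ∪ Zof x π K) ≠ 0 then (1:ℝ) else 0) := by
    have hcard : (Finset.univ : Finset ({i // i ∈ x} ≃ {i // i ∈ xᶜ})).card
        = m.factorial := by
      have hex : Nonempty ({i // i ∈ x} ≃ {i // i ∈ xᶜ}) :=
        ⟨Fintype.equivOfCardEq (by rw [Fintype.card_coe, Fintype.card_coe, hxc])⟩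
      rw [Finset.card_univ, Fintype.card_equiv hex.some, Fintype.card_coe, hx]
    calc ((m.factorial : ℝ)) * ((2:ℝ) ^ m / 2 ^ d)
        = (Finset.univ : Finset ({i // i ∈ x} ≃ {i // i ∈ xᶜ})).card •
            ((2:ℝ) ^ m / 2 ^ d) := by rw [hcard, nsmul_eq_mul]
      _ ≤ _ := Finset.card_nsmul_le_sum _ _ _ hperπ
  have hF : (0:ℝ) < (m.factorial : ℝ) := by exact_mod_cast Nat.factorial_pos m
  have h2pow : (0:ℝ) < (2:ℝ) ^ m := by positivity
  calc (1:ℝ) / 2 ^ d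
      = (1 / (2 ^ m * (m.factorial : ℝ))) * ((m.factorial : ℝ) * ((2:ℝ) ^ m / 2 ^ d)) := by
        field_simp
      _ ≤ _ := by
        apply mul_le_mul_of_nonneg_left htot
        positivity

end RowBound

theorem two_step_lower_bound
    (n : ℕ) (hn : Even n) (d : ℕ)
    (P : Finset (Fin n) → ℝ)
    (hP : ∃ a : Finset (Fin n) → ℝ, ∀ A : Finset (Fin n), A.card = n / 2 →
      P A = ∑ S ∈ Finset.univ.filter (fun S : Finset (Fin n) => S.card ≤ d),
        (∏ i ∈ S, if i ∈ A then (1 : ℝ) else 0) * a S)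
    (hnz : ∃ A : Finset (Fin n), A.card = n / 2 ∧ P A ≠ 0) :
    ((((Finset.univ.filter
          (fun A : Finset (Fin n) => A.card = n / 2 ∧ P A ≠ 0)).card : ℝ) /
        (n.choose (n / 2) : ℝ)) * (1 / 2 ^ d)) ≤
      (1 / (n.choose (n / 2) : ℝ)) *
        ∑ x ∈ Finset.univ.filter
            (fun A : Finset (Fin n) => A.card = n / 2 ∧ P A ≠ 0),
          ∑ y ∈ Finset.univ.filter
              (fun A : Finset (Fin n) => A.card = n / 2 ∧ P A ≠ 0),
            Went n x y := by
  classical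
  obtain ⟨a, ha⟩ := hP
  set T := Finset.univ.filter (fun A : Finset (Fin n) => A.card = n / 2 ∧ P A ≠ 0) with hT
  have hrow : ∀ x ∈ T, (1:ℝ) / 2 ^ d ≤ ∑ y ∈ T, Went n x y := by
    intro x hx
    rw [hT, Finset.mem_filter] at hx
    exact row_bound hn d P a ha x hx.2.1 hx.2.2
  have hsum : (T.card : ℝ) * ((1:ℝ) / 2 ^ d) ≤ ∑ x ∈ T, ∑ y ∈ T, Went n x y := by
    calc (T.card : ℝ) * ((1:ℝ) / 2 ^ d) = T.card • ((1:ℝ) / 2 ^ d) := by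
          rw [nsmul_eq_mul]
      _ ≤ _ := Finset.card_nsmul_le_sum _ _ _ hrow
  have hC : (0:ℝ) < (n.choose (n / 2) : ℝ) := by
    exact_mod_cast Nat.choose_pos (Nat.div_le_self n 2)
  calc ((T.card : ℝ) / (n.choose (n / 2) : ℝ)) * (1 / 2 ^ d)
      = (1 / (n.choose (n / 2) : ℝ)) * ((T.card : ℝ) * ((1:ℝ) / 2 ^ d)) := by ring
    _ ≤ (1 / (n.choose (n / 2) : ℝ)) * ∑ x ∈ T, ∑ y ∈ T, Went n x y := by
        apply mul_le_mul_of_nonneg_left hsum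
        positivity
end

section
/- There exists an absolute constant C > 0 such that for every natural number m ≥ 1: 0 < Σ_{d=0}^{m} C(2m, 2d) / (2^m · C(m, d)) ≤ C · √m, where C(a,b) denotes the binomial coefficient. -/
/-!
STATEMENT 6: The top eigenvalue of the weighted Cayley graph:
0 < Σ_{d=0}^{m} C(2m, 2d) / (2^m · C(m, d)) ≤ C·√m.
-/


open Finset Real Nat

lemma descFac_sq (m d : ℕ) :
    (2*m).descFactorial (2*d) ≤ (2^d * m.descFactorial d)^2 := by
  induction d with
  | zero => simp
  | succ d ih =>
    have h1 : 2*(d+1) = (2*d+1)+1 := by ring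
    rw [h1, Nat.descFactorial_succ, Nat.descFactorial_succ, Nat.descFactorial_succ]
    calc (2*m - (2*d+1)) * ((2*m - 2*d) * (2*m).descFactorial (2*d))
        ≤ (2*(m-d)) * ((2*(m-d)) * ((2^d * m.descFactorial d)^2)) := by
          exact Nat.mul_le_mul (by omega) (Nat.mul_le_mul (by omega) ih)
      _ = (2^(d+1) * ((m - d) * m.descFactorial d))^2 := by ring

lemma choose_sq (m d : ℕ) :
    (2*m).choose (2*d) * (2*d).choose d ≤ 4^d * (m.choose d)^2 := by
  have h := descFac_sq m d
  rw [Nat.descFactorial_eq_factorial_mul_choose, Nat.descFactorial_eq_factorial_mul_choose] at h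
  have h2 : (2*d)! = (2*d).choose d * (d ! * d !) := by
    have := Nat.choose_mul_factorial_mul_factorial (show d ≤ 2*d by omega)
    have h3 : 2*d - d = d := by omega
    rw [h3] at this
    rw [← this]; ring
  have key : (d ! * d !) * ((2*m).choose (2*d) * (2*d).choose d)
      ≤ (d ! * d !) * (4^d * (m.choose d)^2) := by
    calc (d ! * d !) * ((2*m).choose (2*d) * (2*d).choose d)
        = (2*d)! * (2*m).choose (2*d) := by rw [h2]; ring
      _ ≤ (2^d * (d ! * m.choose d))^2 := h
      _ = (d ! * d !) * (4^d * (m.choose d)^2) := by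
          have h4 : (4:ℕ)^d = 2^d * 2^d := by rw [show (4:ℕ) = 2*2 from rfl, mul_pow]
          rw [h4]; ring
  exact Nat.le_of_mul_le_mul_left key (by positivity)

lemma central_lower (d : ℕ) (hd : 1 ≤ d) :
    (4:ℝ)^d ≤ 2 * Real.sqrt d * ((2*d).choose d : ℝ) := by
  induction d, hd using Nat.le_induction with
  | base => norm_num
  | succ d hd ih =>
    have hc := Nat.succ_mul_centralBinom_succ d
    have hcb : Nat.centralBinom d = (2*d).choose d := rfl
    have hcb' : Nat.centralBinom (d+1) = (2*(d+1)).choose (d+1) := rfl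
    rw [hcb, hcb'] at hc
    have hcR : ((d:ℝ)+1) * ((2*(d+1)).choose (d+1) : ℝ)
        = 2 * (2*(d:ℝ)+1) * ((2*d).choose d : ℝ) := by
      exact_mod_cast congrArg (Nat.cast : ℕ → ℝ) hc
    have hcpos : (0:ℝ) < ((2*d).choose d : ℝ) := by
      exact_mod_cast Nat.choose_pos (show d ≤ 2*d by omega)
    set x := Real.sqrt d with hx
    set y := Real.sqrt ((d:ℝ)+1) with hy
    have hx2 : x^2 = d := Real.sq_sqrt (by positivity)
    have hy2 : y^2 = (d:ℝ)+1 := Real.sq_sqrt (by positivity)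
    have hxn : 0 ≤ x := Real.sqrt_nonneg _
    have hyn : 0 ≤ y := Real.sqrt_nonneg _
    -- key: 2*x*((d:ℝ)+1) ≤ y*(2*d+1)
    have hs : (2*x*((d:ℝ)+1))^2 + ((d:ℝ)+1) = (y*(2*(d:ℝ)+1))^2 := by
      linear_combination (4*((d:ℝ)+1)^2) * hx2 - (2*(d:ℝ)+1)^2 * hy2
    have ha : (0:ℝ) ≤ 2*x*((d:ℝ)+1) := by positivity
    have hb : (0:ℝ) ≤ y*(2*(d:ℝ)+1) := by positivity
    have key : 2*x*((d:ℝ)+1) ≤ y*(2*(d:ℝ)+1) := by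
      nlinarith [hs, ha, hb]
    have goal' : ((d:ℝ)+1) * (4:ℝ)^(d+1) ≤ ((d:ℝ)+1) * (2 * y * ((2*(d+1)).choose (d+1) : ℝ)) := by
      calc ((d:ℝ)+1) * (4:ℝ)^(d+1) = 4 * ((d:ℝ)+1) * (4:ℝ)^d := by ring
        _ ≤ 4 * ((d:ℝ)+1) * (2 * x * ((2*d).choose d : ℝ)) := by
            apply mul_le_mul_of_nonneg_left ih (by positivity)
        _ = (2*x*((d:ℝ)+1)) * (4 * ((2*d).choose d : ℝ)) := by ring
        _ ≤ (y*(2*(d:ℝ)+1)) * (4 * ((2*d).choose d : ℝ)) := by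
            apply mul_le_mul_of_nonneg_right key (by positivity)
        _ = 2 * y * (2 * (2*(d:ℝ)+1) * ((2*d).choose d : ℝ)) := by ring
        _ = 2 * y * (((d:ℝ)+1) * ((2*(d+1)).choose (d+1) : ℝ)) := by rw [← hcR]
        _ = ((d:ℝ)+1) * (2 * y * ((2*(d+1)).choose (d+1) : ℝ)) := by ring
    have := le_of_mul_le_mul_left goal' (by positivity : (0:ℝ) < (d:ℝ)+1)
    convert this using 2
    · rfl
    · rw [hy]; push_cast; ring


theorem cayley_top_eigenvalue_bound :
    ∃ C : ℝ, C > 0 ∧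
      ∀ m : ℕ, 1 ≤ m →
        0 < ∑ d ∈ Finset.range (m + 1),
              ((2 * m).choose (2 * d) : ℝ) / (2 ^ m * (m.choose d : ℝ)) ∧
        ∑ d ∈ Finset.range (m + 1),
            ((2 * m).choose (2 * d) : ℝ) / (2 ^ m * (m.choose d : ℝ)) ≤
          C * Real.sqrt m := by
  refine ⟨3, by norm_num, fun m hm => ?_⟩
  have hsqrt : (1:ℝ) ≤ Real.sqrt m := by
    rw [show (1:ℝ) = Real.sqrt 1 by simp]
    exact Real.sqrt_le_sqrt (by exact_mod_cast hm)
  constructor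
  · apply Finset.sum_pos' (fun i _ => by positivity)
    refine ⟨0, Finset.mem_range.mpr (by omega), ?_⟩
    simp only [mul_zero, Nat.choose_zero_right, Nat.cast_one, mul_one]
    positivity
  · have termbound : ∀ d ∈ Finset.range (m+1),
        ((2 * m).choose (2 * d) : ℝ) / (2 ^ m * (m.choose d : ℝ))
          ≤ (1 + 2 * Real.sqrt m) * (m.choose d : ℝ) / 2 ^ m := by
      intro d hd
      have hdm : d ≤ m := by simpa using Nat.lt_succ_iff.mp (Finset.mem_range.mp hd)
      have hb : (0:ℝ) < (m.choose d : ℝ) := by exact_mod_cast Nat.choose_pos hdm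
      rw [div_le_div_iff₀ (by positivity) (by positivity)]
      have hkey : ((2*m).choose (2*d) : ℝ) ≤ (1 + 2 * Real.sqrt m) * (m.choose d : ℝ)^2 := by
        rcases Nat.eq_zero_or_pos d with h0 | h1
        · subst h0
          simp only [mul_zero, Nat.choose_zero_right, Nat.cast_one, one_pow, mul_one]
          nlinarith [Real.sqrt_nonneg (m:ℝ)]
        · have hc : (0:ℝ) < ((2*d).choose d : ℝ) := by
            exact_mod_cast Nat.choose_pos (show d ≤ 2*d by omega)
          have hA : ((2*m).choose (2*d) : ℝ) * ((2*d).choose d : ℝ)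
              ≤ 4^d * ((m.choose d : ℝ))^2 := by exact_mod_cast choose_sq m d
          have hB := central_lower d h1
          have hsd : Real.sqrt d ≤ Real.sqrt m := Real.sqrt_le_sqrt (by exact_mod_cast hdm)
          have h2 : ((2*m).choose (2*d) : ℝ) * ((2*d).choose d : ℝ)
              ≤ (2 * Real.sqrt d) * ((m.choose d : ℝ))^2 * ((2*d).choose d : ℝ) := by
            calc ((2*m).choose (2*d) : ℝ) * ((2*d).choose d : ℝ)
                ≤ 4^d * ((m.choose d : ℝ))^2 := hA
              _ ≤ (2 * Real.sqrt d * ((2*d).choose d : ℝ)) * ((m.choose d : ℝ))^2 := by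
                  apply mul_le_mul_of_nonneg_right hB (by positivity)
              _ = (2 * Real.sqrt d) * ((m.choose d : ℝ))^2 * ((2*d).choose d : ℝ) := by ring
          have h3 : ((2*m).choose (2*d) : ℝ) ≤ (2 * Real.sqrt d) * ((m.choose d : ℝ))^2 :=
            le_of_mul_le_mul_right h2 hc
          calc ((2*m).choose (2*d) : ℝ) ≤ (2 * Real.sqrt d) * ((m.choose d : ℝ))^2 := h3
            _ ≤ (1 + 2 * Real.sqrt m) * ((m.choose d : ℝ))^2 := by nlinarith
      calc ((2*m).choose (2*d) : ℝ) * 2^m ≤ ((1 + 2 * Real.sqrt m) * (m.choose d : ℝ)^2) * 2^m := by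
            apply mul_le_mul_of_nonneg_right hkey (by positivity)
        _ = (1 + 2 * Real.sqrt m) * (m.choose d : ℝ) * (2^m * (m.choose d : ℝ)) := by ring
    have hsum : ∑ d ∈ Finset.range (m+1), (m.choose d : ℝ) = 2^m := by
      rw [← Nat.cast_sum, Nat.sum_range_choose]; push_cast; ring
    calc ∑ d ∈ Finset.range (m + 1),
            ((2 * m).choose (2 * d) : ℝ) / (2 ^ m * (m.choose d : ℝ))
        ≤ ∑ d ∈ Finset.range (m+1), (1 + 2 * Real.sqrt m) * (m.choose d : ℝ) / 2 ^ m :=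
          Finset.sum_le_sum termbound
      _ = (1 + 2 * Real.sqrt m) / 2^m * ∑ d ∈ Finset.range (m+1), (m.choose d : ℝ) := by
          rw [Finset.mul_sum]; congr 1; ext d; ring
      _ = 1 + 2 * Real.sqrt m := by
          rw [hsum]; field_simp
      _ ≤ 3 * Real.sqrt m := by nlinarith
end

section
/- There exist absolute constants δ > 0, c > 0 and N such that for every even natural number n ≥ N, writing m = n/2, the following hold for permutations σ of {1, …, m}: (i) for every integer t with 1 ≤ t ≤ n^δ, the number of permutations σ that are t-good is at most m! / n^{c·t}; (ii) for every integer t with n^δ < t ≤ m, the number of permutations σ that are t-self-good is at most m! / n^{c·t}. -/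
/-!
STATEMENT 7: Upper bound on the number of t-good and t-self-good matchings.
A matching between L = {1,3,…,2m−1} and R = {2,4,…,2m} is encoded by a
permutation σ of Fin m (0-indexed: the 1-based index i corresponds to the
Fin m element with value i−1, so `i ∈ {1,…,t}` becomes `(i : ℕ) < t`).
σ is t-good if for every i ∈ {1,…,t}, σ(i) ∈ {1,…,t} or σ⁻¹(i) ∈ {1,…,t};
σ is t-self-good if it is t-good and every subset T ⊆ {1,…,t} of size ⌊t/2⌋
contains a fixed point of σ.
-/

open Finset

def tGood (m t : ℕ) (σ : Equiv.Perm (Fin m)) : Prop :=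
  ∀ i : Fin m, (i : ℕ) < t → ((σ i : ℕ) < t ∨ (σ⁻¹ i : ℕ) < t)

def tSelfGood (m t : ℕ) (σ : Equiv.Perm (Fin m)) : Prop :=
  tGood m t σ ∧
    ∀ T : Finset (Fin m), (∀ i ∈ T, (i : ℕ) < t) → T.card = t / 2 →
      ∃ i ∈ T, σ i = i

instance (m t : ℕ) : DecidablePred (tGood m t) := fun σ => by
  unfold tGood; infer_instance

instance (m t : ℕ) : DecidablePred (tSelfGood m t) := fun σ => by
  unfold tSelfGood tGood; infer_instance

set_option maxRecDepth 8000

lemma card_P {m t : ℕ} (h : t ≤ m) :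
    (univ.filter (fun i : Fin m => (i : ℕ) < t)).card = t := by
  have : univ.filter (fun i : Fin m => (i : ℕ) < t)
      = (Finset.range t).attachFin (fun x hx => lt_of_lt_of_le (Finset.mem_range.1 hx) h) := by
    ext i; simp [Finset.mem_attachFin]
  rw [this, Finset.card_attachFin, Finset.card_range]

lemma card_fix_le {m : ℕ} (S : Finset (Fin m)) :
    (univ.filter (fun τ : Equiv.Perm (Fin m) => ∀ i ∈ S, τ i = i)).card
      ≤ (m - S.card).factorial := by
  classical
  have key : ∀ τ : Equiv.Perm (Fin m), (∀ i ∈ S, τ i = i) → ∀ x : Fin m, x ∉ S ↔ τ x ∉ S := by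
    intro τ hτ x
    constructor
    · intro hx hτx
      have h1 := hτ (τ x) hτx
      have h2 : τ x = x := τ.injective h1
      rw [h2] at hτx; exact hx hτx
    · intro hτx hx
      exact hτx (by rw [hτ x hx]; exact hx)
  set f : Equiv.Perm (Fin m) → Equiv.Perm {x : Fin m // x ∉ S} := fun τ =>
    if h : ∀ i ∈ S, τ i = i then τ.subtypePerm (fun x => (key τ h x).symm) else 1 with hf
  have hle : (univ.filter (fun τ : Equiv.Perm (Fin m) => ∀ i ∈ S, τ i = i)).card
      ≤ (univ : Finset (Equiv.Perm {x : Fin m // x ∉ S})).card := by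
    apply Finset.card_le_card_of_injOn f (fun _ _ => Finset.mem_univ _)
    intro τ hτ τ' hτ' hff
    simp only [Finset.coe_filter, Set.mem_setOf_eq, Finset.mem_univ, true_and] at hτ hτ'
    simp only [hf, dif_pos hτ, dif_pos hτ'] at hff
    ext x
    by_cases hx : x ∈ S
    · rw [hτ x hx, hτ' x hx]
    · have := congrArg (fun e => (e ⟨x, hx⟩ : {x : Fin m // x ∉ S}).val) hff
      exact congrArg Fin.val (by simpa using this)
  calc _ ≤ _ := hle
    _ = (Fintype.card {x : Fin m // x ∉ S}).factorial := by
        rw [Finset.card_univ, Fintype.card_perm]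
    _ = (m - S.card).factorial := by
        congr 1
        rw [Fintype.card_subtype_compl, Fintype.card_fin, Fintype.card_coe]

lemma card_agree_le {m : ℕ} (S : Finset (Fin m)) (g : Fin m → Fin m) :
    (univ.filter (fun σ : Equiv.Perm (Fin m) => ∀ i ∈ S, σ i = g i)).card
      ≤ (m - S.card).factorial := by
  classical
  rcases (univ.filter (fun σ : Equiv.Perm (Fin m) => ∀ i ∈ S, σ i = g i)).eq_empty_or_nonempty
    with h | ⟨σ₀, hσ₀⟩
  · simp [h]
  · refine le_trans ?_ (card_fix_le S)
    apply Finset.card_le_card_of_injOn (fun σ => σ₀⁻¹ * σ)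
    · intro σ hσ
      simp only [Finset.coe_filter, Set.mem_setOf_eq, Finset.mem_filter, Finset.mem_univ, true_and] at hσ hσ₀ ⊢
      intro i hi
      rw [Equiv.Perm.mul_apply, hσ i hi, ← hσ₀ i hi, show σ₀⁻¹ (σ₀ i) = i from Equiv.symm_apply_apply σ₀ i]
    · intro a _ b _ hab; exact mul_left_cancel hab

lemma card_mapsto_le {m t : ℕ} (hm : 0 < m) (S : Finset (Fin m)) :
    (univ.filter (fun σ : Equiv.Perm (Fin m) => ∀ i ∈ S, (σ i : ℕ) < t)).card
      ≤ t ^ S.card * (m - S.card).factorial := by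
  classical
  set T : Finset (Fin m) := univ.filter (fun j : Fin m => (j : ℕ) < t) with hT
  set i0 : Fin m := ⟨0, hm⟩
  set B : Finset (Fin m → Fin m) :=
    Fintype.piFinset (fun i => if i ∈ S then T else {i0}) with hB
  have hsub : univ.filter (fun σ : Equiv.Perm (Fin m) => ∀ i ∈ S, (σ i : ℕ) < t)
      ⊆ B.biUnion (fun g => univ.filter (fun σ : Equiv.Perm (Fin m) => ∀ i ∈ S, σ i = g i)) := by
    intro σ hσ
    simp only [Finset.mem_filter, Finset.mem_univ, true_and] at hσ
    apply Finset.mem_biUnion.2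
    refine ⟨fun i => if i ∈ S then σ i else i0, ?_, ?_⟩
    · rw [hB, Fintype.mem_piFinset]
      intro i
      by_cases hi : i ∈ S
      · simp [hi, hT, hσ i hi]
      · simp [hi]
    · simp only [Finset.mem_filter, Finset.mem_univ, true_and]
      intro i hi
      simp [hi]
  have hTcard : T.card ≤ t := by
    have h := Finset.card_le_card_of_injOn (s := T) (t := Finset.range t) (fun j : Fin m => (j : ℕ))
      ?_ ?_
    · simpa using h
    · intro j hj
      rw [Finset.mem_coe, hT, Finset.mem_filter] at hj
      exact Finset.mem_range.2 hj.2
    · intro a _ b _ hab; exact Fin.ext hab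
  have hBcard : B.card ≤ t ^ S.card := by
    rw [hB, Fintype.card_piFinset]
    calc ∏ i : Fin m, (if i ∈ S then T else {i0}).card
        = ∏ i : Fin m, (if i ∈ S then T.card else 1) := by
          apply Finset.prod_congr rfl
          intro i _
          by_cases hi : i ∈ S <;> simp [hi]
      _ = ∏ i ∈ S, T.card := by
          rw [← Finset.prod_filter]
          congr 1
          ext i; simp
      _ = T.card ^ S.card := by rw [Finset.prod_const]
      _ ≤ t ^ S.card := Nat.pow_le_pow_left hTcard _
  calc _ ≤ (B.biUnion (fun g => univ.filter
        (fun σ : Equiv.Perm (Fin m) => ∀ i ∈ S, σ i = g i))).card := Finset.card_le_card hsub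
    _ ≤ ∑ g ∈ B, (univ.filter (fun σ : Equiv.Perm (Fin m) => ∀ i ∈ S, σ i = g i)).card :=
        Finset.card_biUnion_le
    _ ≤ ∑ _g ∈ B, (m - S.card).factorial := Finset.sum_le_sum (fun g _ => card_agree_le S g)
    _ = B.card * (m - S.card).factorial := by rw [Finset.sum_const, smul_eq_mul]
    _ ≤ t ^ S.card * (m - S.card).factorial := Nat.mul_le_mul_right _ hBcard

lemma good_count {m t : ℕ} (ht : 1 ≤ t) (htm : t ≤ m) :
    (univ.filter (fun σ : Equiv.Perm (Fin m) => tGood m t σ)).card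
      ≤ t.choose ((t + 1) / 2) * (t ^ ((t + 1) / 2) * (m - (t + 1) / 2).factorial) := by
  classical
  set s := (t + 1) / 2 with hs
  set P : Finset (Fin m) := univ.filter (fun i : Fin m => (i : ℕ) < t) with hP
  have hPcard : P.card = t := card_P htm
  have hsub : univ.filter (fun σ : Equiv.Perm (Fin m) => tGood m t σ)
      ⊆ (Finset.powersetCard s P).biUnion
        (fun S => univ.filter (fun σ : Equiv.Perm (Fin m) => ∀ i ∈ S, (σ i : ℕ) < t)) := by
    intro σ hσ
    simp only [Finset.mem_filter, Finset.mem_univ, true_and] at hσ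
    set A : Finset (Fin m) := P.filter (fun i => (σ i : ℕ) < t) with hA
    have hPA : P ⊆ A ∪ A.image σ := by
      intro i hi
      have hit : (i : ℕ) < t := (Finset.mem_filter.1 hi).2
      rcases hσ i hit with h1 | h2
      · exact Finset.mem_union_left _ (Finset.mem_filter.2 ⟨hi, h1⟩)
      · apply Finset.mem_union_right
        apply Finset.mem_image.2
        refine ⟨σ⁻¹ i, ?_, Equiv.apply_symm_apply σ i⟩
        apply Finset.mem_filter.2
        constructor
        · exact Finset.mem_filter.2 ⟨Finset.mem_univ _, h2⟩
        · rw [show σ (σ⁻¹ i) = i from Equiv.apply_symm_apply σ i]; exact hit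
    have hcard : t ≤ 2 * A.card := by
      calc t = P.card := hPcard.symm
        _ ≤ (A ∪ A.image σ).card := Finset.card_le_card hPA
        _ ≤ A.card + (A.image σ).card := Finset.card_union_le _ _
        _ ≤ A.card + A.card := Nat.add_le_add_left (Finset.card_image_le) _
        _ = 2 * A.card := by ring
    have hsA : s ≤ A.card := by omega
    obtain ⟨S, hSA, hScard⟩ := Finset.exists_subset_card_eq hsA
    apply Finset.mem_biUnion.2
    refine ⟨S, ?_, ?_⟩
    · exact Finset.mem_powersetCard.2 ⟨hSA.trans (Finset.filter_subset _ _), hScard⟩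
    · simp only [Finset.mem_filter, Finset.mem_univ, true_and]
      intro i hi
      exact (Finset.mem_filter.1 (hSA hi)).2
  have hm : 0 < m := lt_of_lt_of_le ht htm
  calc _ ≤ ((Finset.powersetCard s P).biUnion
        (fun S => univ.filter (fun σ : Equiv.Perm (Fin m) => ∀ i ∈ S, (σ i : ℕ) < t))).card :=
        Finset.card_le_card hsub
    _ ≤ ∑ S ∈ Finset.powersetCard s P,
        (univ.filter (fun σ : Equiv.Perm (Fin m) => ∀ i ∈ S, (σ i : ℕ) < t)).card :=
        Finset.card_biUnion_le
    _ ≤ ∑ S ∈ Finset.powersetCard s P, t ^ s * (m - s).factorial := by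
        apply Finset.sum_le_sum
        intro S hS
        have hScard : S.card = s := (Finset.mem_powersetCard.1 hS).2
        calc _ ≤ t ^ S.card * (m - S.card).factorial := card_mapsto_le hm S
          _ = t ^ s * (m - s).factorial := by rw [hScard]
    _ = (Finset.powersetCard s P).card * (t ^ s * (m - s).factorial) := by
        rw [Finset.sum_const, smul_eq_mul]
    _ = t.choose s * (t ^ s * (m - s).factorial) := by
        rw [Finset.card_powersetCard, hPcard]

lemma selfgood_count {m t : ℕ} (ht : 2 ≤ t) (htm : t ≤ m) :
    (univ.filter (fun σ : Equiv.Perm (Fin m) => tSelfGood m t σ)).card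
      ≤ t.choose ((t + 1) / 2) * (m - (t + 1) / 2).factorial := by
  classical
  set s := (t + 1) / 2 with hs
  set P : Finset (Fin m) := univ.filter (fun i : Fin m => (i : ℕ) < t) with hP
  have hPcard : P.card = t := card_P htm
  have hsub : univ.filter (fun σ : Equiv.Perm (Fin m) => tSelfGood m t σ)
      ⊆ (Finset.powersetCard s P).biUnion
        (fun S => univ.filter (fun σ : Equiv.Perm (Fin m) => ∀ i ∈ S, σ i = i)) := by
    intro σ hσ
    simp only [Finset.mem_filter, Finset.mem_univ, true_and] at hσ
    obtain ⟨hg, hsg⟩ := hσ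
    set F : Finset (Fin m) := P.filter (fun i => σ i = i) with hF
    have hFcard : s ≤ F.card := by
      by_contra hcon
      push_neg at hcon
      have hsd : t / 2 ≤ (P \ F).card := by
        have h1 : (P \ F).card = P.card - F.card :=
          Finset.card_sdiff_of_subset (Finset.filter_subset _ _)
        omega
      obtain ⟨T, hTsub, hTcard⟩ := Finset.exists_subset_card_eq hsd
      obtain ⟨i, hiT, hfix⟩ := hsg T
        (fun i hi => (Finset.mem_filter.1 (Finset.mem_sdiff.1 (hTsub hi)).1).2) hTcard
      have hi' := Finset.mem_sdiff.1 (hTsub hiT)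
      exact hi'.2 (Finset.mem_filter.2 ⟨hi'.1, hfix⟩)
    obtain ⟨S, hSF, hScard⟩ := Finset.exists_subset_card_eq hFcard
    apply Finset.mem_biUnion.2
    refine ⟨S, ?_, ?_⟩
    · exact Finset.mem_powersetCard.2 ⟨hSF.trans (Finset.filter_subset _ _), hScard⟩
    · simp only [Finset.mem_filter, Finset.mem_univ, true_and]
      intro i hi
      exact (Finset.mem_filter.1 (hSF hi)).2
  calc _ ≤ _ := Finset.card_le_card hsub
    _ ≤ ∑ S ∈ Finset.powersetCard s P,
        (univ.filter (fun σ : Equiv.Perm (Fin m) => ∀ i ∈ S, σ i = i)).card :=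
        Finset.card_biUnion_le
    _ ≤ ∑ S ∈ Finset.powersetCard s P, (m - s).factorial := by
        apply Finset.sum_le_sum
        intro S hS
        have hScard : S.card = s := (Finset.mem_powersetCard.1 hS).2
        calc _ ≤ (m - S.card).factorial := card_fix_le S
          _ = (m - s).factorial := by rw [hScard]
    _ = (Finset.powersetCard s P).card * (m - s).factorial := by
        rw [Finset.sum_const, smul_eq_mul]
    _ = t.choose s * (m - s).factorial := by
        rw [Finset.card_powersetCard, hPcard]

lemma choose_le_two_pow' {t s : ℕ} (h : s ≤ t) : t.choose s ≤ 2 ^ t := by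
  calc t.choose s ≤ ∑ i ∈ Finset.range (t + 1), t.choose i :=
        Finset.single_le_sum (fun i _ => Nat.zero_le _) (Finset.mem_range.2 (by omega))
    _ = 2 ^ t := Nat.sum_range_choose t

lemma rpow_pow_eq {x : ℝ} (hx : 0 ≤ x) (a : ℝ) (k : ℕ) : (x ^ a) ^ k = x ^ (a * k) := by
  rw [← Real.rpow_natCast (x ^ a) k, ← Real.rpow_mul hx]

theorem good_matching_count_bound :
    ∃ (δ c : ℝ) (N : ℕ), δ > 0 ∧ c > 0 ∧
      ∀ n : ℕ, Even n → N ≤ n →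
        (∀ t : ℕ, 1 ≤ t → (t : ℝ) ≤ (n : ℝ) ^ δ →
          ((Finset.univ.filter
              (fun σ : Equiv.Perm (Fin (n / 2)) => tGood (n / 2) t σ)).card : ℝ) ≤
            ((n / 2).factorial : ℝ) / (n : ℝ) ^ (c * t)) ∧
        (∀ t : ℕ, (n : ℝ) ^ δ < (t : ℝ) → t ≤ n / 2 →
          ((Finset.univ.filter
              (fun σ : Equiv.Perm (Fin (n / 2)) => tSelfGood (n / 2) t σ)).card : ℝ) ≤
            ((n / 2).factorial : ℝ) / (n : ℝ) ^ (c * t)) := by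
  refine ⟨1/10, 1/80, 2^200, by norm_num, by norm_num, ?_⟩
  intro n hEven hN
  set x : ℝ := (n : ℝ) with hxdef
  have hxN : (2:ℝ)^(200:ℕ) ≤ x := by rw [hxdef]; exact_mod_cast hN
  have hx1 : (1:ℝ) ≤ x := le_trans (by norm_num) hxN
  have hx0 : (0:ℝ) < x := lt_of_lt_of_le one_pos hx1
  have h20 : (1024:ℝ) ≤ x ^ ((1:ℝ)/20) := by
    have h1 : ((2:ℝ)^(200:ℕ)) ^ ((1:ℝ)/20) = (2:ℝ)^(10:ℕ) := by
      rw [← Real.rpow_natCast (2:ℝ) 200, ← Real.rpow_mul (by norm_num),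
        ← Real.rpow_natCast (2:ℝ) 10]
      norm_num
    calc (1024:ℝ) = (2:ℝ)^(10:ℕ) := by norm_num
      _ = ((2:ℝ)^(200:ℕ)) ^ ((1:ℝ)/20) := h1.symm
      _ ≤ x ^ ((1:ℝ)/20) := Real.rpow_le_rpow (by positivity) hxN (by norm_num)
  have hmono : ∀ a b : ℝ, a ≤ b → x ^ a ≤ x ^ b := fun a b hab =>
    Real.rpow_le_rpow_of_exponent_le hx1 hab
  have hbig : ∀ e : ℝ, 1/20 ≤ e → (1024:ℝ) ≤ x ^ e := fun e he =>
    le_trans h20 (hmono _ _ he)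
  -- m = n/2 in reals
  have hmcast : ((n / 2 : ℕ) : ℝ) = x / 2 := by
    obtain ⟨k, hk⟩ := hEven
    have hk2 : n = 2 * k := by omega
    subst hk2
    rw [hxdef]
    push_cast [Nat.mul_div_cancel_left k (by norm_num : 0 < 2)]
    ring
  have hq110 : x ^ ((1:ℝ)/10) ≤ x / 4 := by
    have h9 : (4:ℝ) ≤ x ^ ((9:ℝ)/10) := le_trans (by norm_num) (hbig _ (by norm_num))
    have hsplit : x ^ ((9:ℝ)/10) * x ^ ((1:ℝ)/10) = x := by
      rw [← Real.rpow_add hx0]; norm_num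
    nlinarith [Real.rpow_nonneg hx0.le ((1:ℝ)/10)]
  constructor
  · -- part (i)
    intro t ht1 ht2
    have htm : t ≤ n / 2 := by
      have : (t:ℝ) ≤ ((n/2 : ℕ):ℝ) := by rw [hmcast]; linarith
      exact_mod_cast this
    set m := n / 2 with hm
    set s := (t + 1) / 2 with hs
    have hsm : s ≤ m := le_trans (by omega) htm
    have hcount := good_count ht1 htm
    have hchoose : t.choose s ≤ t ^ s := Nat.choose_le_pow t s
    have hcount2 : (univ.filter (fun σ : Equiv.Perm (Fin m) => tGood m t σ)).card
        ≤ t ^ s * (t ^ s * (m - s).factorial) :=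
      le_trans hcount (Nat.mul_le_mul_right _ hchoose)
    have hfact : (m + 1 - s) ^ s * (m - s).factorial ≤ m.factorial := by
      calc (m + 1 - s) ^ s * (m - s).factorial
          ≤ m.descFactorial s * (m - s).factorial :=
            Nat.mul_le_mul_right _ (Nat.pow_sub_le_descFactorial m s)
        _ = m.factorial := by rw [mul_comm, Nat.factorial_mul_descFactorial hsm]
    rw [le_div_iff₀ (Real.rpow_pos_of_pos hx0 _)]
    have hstep : ((t:ℝ) ^ s * ((t:ℝ) ^ s * ((m - s).factorial : ℝ))) * x ^ ((1:ℝ)/80 * t)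
        ≤ (((m + 1 - s : ℕ)) : ℝ) ^ s * ((m - s).factorial : ℝ) := by
      have hb1 : (t:ℝ) ^ s ≤ (x ^ ((1:ℝ)/10)) ^ s :=
        pow_le_pow_left₀ (by positivity) ht2 s
      have hb2 : x ^ ((1:ℝ)/80 * t) ≤ (x ^ ((1:ℝ)/40)) ^ s := by
        rw [rpow_pow_eq hx0.le]
        apply hmono
        have : t ≤ 2 * s := by omega
        have : (t:ℝ) ≤ 2 * s := by exact_mod_cast this
        linarith
      have hcomb : ((t:ℝ) ^ s * ((t:ℝ) ^ s * ((m - s).factorial : ℝ))) * x ^ ((1:ℝ)/80 * t)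
          ≤ ((x ^ ((1:ℝ)/10)) ^ s * (x ^ ((1:ℝ)/10)) ^ s * (x ^ ((1:ℝ)/40)) ^ s)
            * ((m - s).factorial : ℝ) := by
        have h1 : (0:ℝ) ≤ ((m - s).factorial : ℝ) := by positivity
        have h2 : (0:ℝ) ≤ (t:ℝ) ^ s := by positivity
        have h3 : (0:ℝ) ≤ x ^ ((1:ℝ)/80 * t) := by positivity
        have step1 : (t:ℝ) ^ s * (t:ℝ) ^ s ≤ (x ^ ((1:ℝ)/10)) ^ s * (x ^ ((1:ℝ)/10)) ^ s :=
          mul_le_mul hb1 hb1 h2 (by positivity)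
        have step2 : (t:ℝ) ^ s * (t:ℝ) ^ s * x ^ ((1:ℝ)/80 * t)
            ≤ (x ^ ((1:ℝ)/10)) ^ s * (x ^ ((1:ℝ)/10)) ^ s * (x ^ ((1:ℝ)/40)) ^ s :=
          mul_le_mul step1 hb2 h3 (by positivity)
        calc ((t:ℝ) ^ s * ((t:ℝ) ^ s * ((m - s).factorial : ℝ))) * x ^ ((1:ℝ)/80 * t)
            = ((t:ℝ) ^ s * (t:ℝ) ^ s * x ^ ((1:ℝ)/80 * t)) * ((m - s).factorial : ℝ) := by ring
          _ ≤ _ := mul_le_mul_of_nonneg_right step2 h1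
      refine hcomb.trans ?_
      apply mul_le_mul_of_nonneg_right ?_ (by positivity)
      have hx940 : x ^ ((1:ℝ)/10) * x ^ ((1:ℝ)/10) * x ^ ((1:ℝ)/40) = x ^ ((9:ℝ)/40) := by
        rw [← Real.rpow_add hx0, ← Real.rpow_add hx0]; norm_num
      rw [← mul_pow, ← mul_pow, hx940]
      have hbase : x ^ ((9:ℝ)/40) ≤ (((m + 1 - s : ℕ)) : ℝ) := by
        have h31 : (4:ℝ) ≤ x ^ ((31:ℝ)/40) := le_trans (by norm_num) (hbig _ (by norm_num))
        have hsplit : x ^ ((31:ℝ)/40) * x ^ ((9:ℝ)/40) = x := by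
          rw [← Real.rpow_add hx0]; norm_num
        have hcast : (((m + 1 - s : ℕ)) : ℝ) = ((m:ℕ):ℝ) + 1 - s := by
          have : s ≤ m + 1 := by omega
          push_cast [this]
          ring
        have hts : (s:ℝ) ≤ (t:ℝ) := by exact_mod_cast (by omega : s ≤ t)
        have hmx : ((m:ℕ):ℝ) = x / 2 := hmcast
        rw [hcast, hmx]
        nlinarith [Real.rpow_nonneg hx0.le ((9:ℝ)/40), hq110, ht2]
      exact pow_le_pow_left₀ (by positivity) hbase s
    calc ((univ.filter (fun σ : Equiv.Perm (Fin m) => tGood m t σ)).card : ℝ) * x ^ ((1:ℝ)/80 * t)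
        ≤ ((t ^ s * (t ^ s * (m - s).factorial) : ℕ) : ℝ) * x ^ ((1:ℝ)/80 * t) := by
          apply mul_le_mul_of_nonneg_right _ (by positivity)
          exact_mod_cast hcount2
      _ = ((t:ℝ) ^ s * ((t:ℝ) ^ s * ((m - s).factorial : ℝ))) * x ^ ((1:ℝ)/80 * t) := by
          push_cast; ring
      _ ≤ (((m + 1 - s : ℕ)) : ℝ) ^ s * ((m - s).factorial : ℝ) := hstep
      _ = (((m + 1 - s) ^ s * (m - s).factorial : ℕ) : ℝ) := by push_cast; ring
      _ ≤ (m.factorial : ℝ) := by exact_mod_cast hfact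
  · -- part (ii)
    intro t ht1 htm
    set m := n / 2 with hm
    have ht2 : 2 ≤ t := by
      have h1 : (1024:ℝ) ≤ x ^ ((1:ℝ)/10) := hbig _ (by norm_num)
      have : (2:ℝ) ≤ (t:ℝ) := by linarith
      exact_mod_cast this
    set s := (t + 1) / 2 with hs
    set q := s / 2 with hq
    set r := s - q with hr
    have hsm : s ≤ m := le_trans (by omega) htm
    have hcount := selfgood_count ht2 htm
    have hcount2 : (univ.filter (fun σ : Equiv.Perm (Fin m) => tSelfGood m t σ)).card
        ≤ 2 ^ t * (m - s).factorial :=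
      le_trans hcount (Nat.mul_le_mul_right _ (choose_le_two_pow' (by omega)))
    -- s! ≥ (q+1)^r
    have hsfact : (q + 1) ^ r ≤ s.factorial := by
      calc (q + 1) ^ r = (s + 1 - r) ^ r := by congr 1; omega
        _ ≤ s.descFactorial r := Nat.pow_sub_le_descFactorial s r
        _ ≤ (s - r).factorial * s.descFactorial r := Nat.le_mul_of_pos_left _ (s - r).factorial_pos
        _ = s.factorial := Nat.factorial_mul_descFactorial (by omega)
    have hmfact : s.factorial * (m - s).factorial ≤ m.factorial := by
      have h := Nat.choose_mul_factorial_mul_factorial hsm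
      have hpos : 1 ≤ m.choose s := Nat.choose_pos hsm
      calc s.factorial * (m - s).factorial
          ≤ m.choose s * s.factorial * (m - s).factorial := by
            have := Nat.mul_le_mul_right (s.factorial) hpos
            exact Nat.mul_le_mul_right _ (by simpa using this)
        _ = m.factorial := h
    rw [le_div_iff₀ (Real.rpow_pos_of_pos hx0 _)]
    have hkey : (2:ℝ) ^ t * x ^ ((1:ℝ)/80 * t) ≤ (((q + 1 : ℕ)) : ℝ) ^ r := by
      have hbase1 : (1:ℝ) ≤ 2 * x ^ ((1:ℝ)/80) := by
        have : (1:ℝ) ≤ x ^ ((1:ℝ)/80) := Real.one_le_rpow hx1 (by norm_num)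
        linarith
      have he1 : (2:ℝ) ^ t * x ^ ((1:ℝ)/80 * t) = (2 * x ^ ((1:ℝ)/80)) ^ t := by
        rw [mul_pow, rpow_pow_eq hx0.le]
      have he2 : (2 * x ^ ((1:ℝ)/80)) ^ t ≤ ((2 * x ^ ((1:ℝ)/80)) ^ 4) ^ r := by
        rw [← pow_mul]
        exact pow_le_pow_right₀ hbase1 (by omega)
      have he3 : ((2 * x ^ ((1:ℝ)/80)) ^ 4) = 16 * x ^ ((1:ℝ)/20) := by
        rw [mul_pow, rpow_pow_eq hx0.le]
        norm_num
      have hbase2 : 16 * x ^ ((1:ℝ)/20) ≤ (((q + 1 : ℕ)) : ℝ) := by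
        have hq4 : t ≤ 4 * (q + 1) := by omega
        have hq4' : (t:ℝ) ≤ 4 * (((q + 1 : ℕ)) : ℝ) := by exact_mod_cast hq4
        have hy0 : (0:ℝ) ≤ x ^ ((1:ℝ)/20) := Real.rpow_nonneg hx0.le _
        have hyy : 1024 * x ^ ((1:ℝ)/20) ≤ x ^ ((1:ℝ)/10) := by
          have hx110 : x ^ ((1:ℝ)/10) = x ^ ((1:ℝ)/20) * x ^ ((1:ℝ)/20) := by
            rw [← Real.rpow_add hx0]; norm_num
          rw [hx110]
          exact mul_le_mul_of_nonneg_right h20 hy0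
        linarith
      calc (2:ℝ) ^ t * x ^ ((1:ℝ)/80 * t) = (2 * x ^ ((1:ℝ)/80)) ^ t := he1
        _ ≤ ((2 * x ^ ((1:ℝ)/80)) ^ 4) ^ r := he2
        _ = (16 * x ^ ((1:ℝ)/20)) ^ r := by rw [he3]
        _ ≤ (((q + 1 : ℕ)) : ℝ) ^ r := pow_le_pow_left₀ (by positivity) hbase2 r
    calc ((univ.filter (fun σ : Equiv.Perm (Fin m) => tSelfGood m t σ)).card : ℝ)
          * x ^ ((1:ℝ)/80 * t)
        ≤ ((2 ^ t * (m - s).factorial : ℕ) : ℝ) * x ^ ((1:ℝ)/80 * t) := by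
          apply mul_le_mul_of_nonneg_right _ (by positivity)
          exact_mod_cast hcount2
      _ = ((2:ℝ) ^ t * x ^ ((1:ℝ)/80 * t)) * ((m - s).factorial : ℝ) := by push_cast; ring
      _ ≤ (((q + 1 : ℕ)) : ℝ) ^ r * ((m - s).factorial : ℝ) :=
          mul_le_mul_of_nonneg_right hkey (by positivity)
      _ = (((q + 1) ^ r * (m - s).factorial : ℕ) : ℝ) := by push_cast; ring
      _ ≤ ((s.factorial * (m - s).factorial : ℕ) : ℝ) := by
          exact_mod_cast Nat.mul_le_mul_right _ hsfact
      _ ≤ (m.factorial : ℝ) := by exact_mod_cast hmfact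
end

section
/- Let p be a prime, q = p^ℓ a power of p, and let n, k, d be natural numbers with d ≤ k ≤ n − d such that k is (d,p)-good. Then every degree-d polynomial function f : {0,1}^n_k → Z_q can be written uniquely as a Z_q-linear combination of the homogeneous degree-d multilinear monomials: there exist unique coefficients b_T ∈ Z_q, one for each T ⊆ {1,…,n} with |T| = d, such that f(x) = Σ_{|T| = d} b_T · ∏_{i∈T} x_i for all x ∈ {0,1}^n_k. -/
/-!
STATEMENT 10: For (d,p)-good slices, the homogeneous degree-d multilinear
monomials form a basis: every degree-d polynomial function on the slice
{0,1}^n_k with values in Z_q (q = p^ℓ) is a unique Z_q-linear combination of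
monomials ∏_{i∈T} x_i with |T| = d.
Points of the slice are encoded as `A : Finset (Fin n)` with `A.card = k`.
Writing d = Σ b_j p^j and k = Σ a_j p^j in base p, with ℓ' = Nat.log p d the
index of the leading digit of d, k is (d,p)-good iff k ≥ d, a_j = b_j for
j < ℓ' (equivalently k ≡ d mod p^ℓ') and a_{ℓ'} ≥ b_{ℓ'}.
-/

open Finset

/-- `k` is a `(d,p)`-good slice. -/
def IsGoodSlice (p d k : ℕ) : Prop :=
  d ≤ k ∧
    k % p ^ (Nat.log p d) = d % p ^ (Nat.log p d) ∧
    d / p ^ (Nat.log p d) % p ≤ k / p ^ (Nat.log p d) % p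

lemma good_no_carry (p d k : ℕ) (hp : p.Prime) (hg : IsGoodSlice p d k) :
    ∀ i, 1 ≤ i → ∀ e ≤ d, e % p ^ i + (k - d) % p ^ i < p ^ i := by
  obtain ⟨hdk, hmod, hdig⟩ := hg
  set L := Nat.log p d with hL
  have hp1 : 1 < p := hp.one_lt
  have hp0 : 0 < p := hp.pos
  have hpL : p ^ L ∣ k - d := (Nat.modEq_iff_dvd' hdk).mp hmod.symm
  intro i hi e he
  by_cases hiL : i ≤ L
  · obtain ⟨c, hc⟩ := (pow_dvd_pow p hiL).trans hpL
    have h0 : (k - d) % p ^ i = 0 := by rw [hc, Nat.mul_mod_right]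
    rw [h0, add_zero]
    exact Nat.mod_lt _ (pow_pos hp0 i)
  · push_neg at hiL
    set x := k / p ^ L with hx
    set y := d / p ^ L with hy
    have hd_lt : d < p ^ (L + 1) := Nat.lt_pow_succ_log_self hp1 d
    have hyp : y < p := Nat.div_lt_of_lt_mul (by rw [← pow_succ]; exact hd_lt)
    -- e % p^i = e
    have hei : e % p ^ i = e :=
      Nat.mod_eq_of_lt ((he.trans_lt hd_lt).trans_le (Nat.pow_le_pow_right hp0 hiL))
    rw [hei]
    -- k - d = p^L * (x - y)
    have hxy : y ≤ x := Nat.div_le_div_right hdk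
    have hkd : k - d = p ^ L * (x - y) := by
      obtain ⟨z, hz⟩ := Nat.exists_eq_add_of_le hxy
      have hk' : k = p ^ L * x + k % p ^ L := (Nat.div_add_mod k (p ^ L)).symm
      have hd' : d = p ^ L * y + d % p ^ L := (Nat.div_add_mod d (p ^ L)).symm
      rw [hz, Nat.add_sub_cancel_left] at *
      rw [hz] at hk'
      rw [mul_add] at hk'
      set A := p ^ L * y
      set B := p ^ L * z
      omega
    -- j := i - L
    obtain ⟨j, hj⟩ : ∃ j, i = L + j := ⟨i - L, by omega⟩
    have hj1 : 1 ≤ j := by omega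
    subst hj
    -- m % p^i = p^L * u
    have hmm : (k - d) % p ^ (L + j) = p ^ L * ((x - y) % p ^ j) := by
      rw [hkd, pow_add, Nat.mul_mod_mul_left]
    rw [hmm]
    set u := (x - y) % p ^ j with hu
    have hult : u < p ^ j := Nat.mod_lt _ (pow_pos hp0 j)
    -- t := u % p = (x - y) % p
    have ht : u % p = (x - y) % p := Nat.mod_mod_of_dvd _ (dvd_pow_self p (by omega))
    -- (x - y) % p = x % p - y % p
    have hsub : (x - y) % p = x % p - y % p := by
      have h1 : x - y ≡ x % p - y % p [MOD p] := by
        have hxm : x ≡ x % p [MOD p] := (Nat.mod_modEq x p).symm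
        have hym : y ≡ y % p [MOD p] := (Nat.mod_modEq y p).symm
        refine Nat.ModEq.add_right_cancel hym ?_
        rw [Nat.sub_add_cancel hxy, Nat.sub_add_cancel hdig]
        exact hxm
      have h2 : x % p - y % p < p := lt_of_le_of_lt (Nat.sub_le _ _) (Nat.mod_lt _ hp0)
      rw [Nat.ModEq] at h1
      rw [h1, Nat.mod_eq_of_lt h2]
    have htb : u % p + y < p := by
      have hxp : x % p < p := Nat.mod_lt _ hp0
      have hyy : y % p = y := Nat.mod_eq_of_lt hyp
      rw [ht, hsub]
      omega
    -- final arithmetic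
    have hde : e < p ^ L * (y + 1) := by
      have : d = p ^ L * y + d % p ^ L := (Nat.div_add_mod d (p ^ L)).symm
      have hr : d % p ^ L < p ^ L := Nat.mod_lt _ (pow_pos hp0 L)
      have := he
      nlinarith [Nat.div_add_mod d (p ^ L)]
    have hq1 : u / p + 1 ≤ p ^ (j - 1) := by
      have : u / p < p ^ (j - 1) := Nat.div_lt_of_lt_mul (by
        rw [← pow_succ']
        have : j - 1 + 1 = j := by omega
        rw [this]; exact hult)
      omega
    have hu2 : u = p * (u / p) + u % p := (Nat.div_add_mod u p).symm
    calc e + p ^ L * u = e + p ^ L * (p * (u / p) + u % p) := by rw [← hu2]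
      _ = e + p ^ L * (u % p) + p ^ (L + 1) * (u / p) := by ring
      _ < p ^ L * (y + 1) + p ^ L * (u % p) + p ^ (L + 1) * (u / p) := by omega
      _ = p ^ L * (u % p + y + 1) + p ^ (L + 1) * (u / p) := by ring
      _ ≤ p ^ L * p + p ^ (L + 1) * (u / p) := by
          have := htb
          have h5 : u % p + y + 1 ≤ p := by omega
          exact Nat.add_le_add_right (Nat.mul_le_mul_left _ h5) _
      _ = p ^ (L + 1) * (u / p + 1) := by ring
      _ ≤ p ^ (L + 1) * p ^ (j - 1) := Nat.mul_le_mul_left _ hq1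
      _ = p ^ (L + j) := by rw [← pow_add]; congr 1; omega

lemma good_not_dvd_choose (p d k : ℕ) (hp : p.Prime) (hg : IsGoodSlice p d k) :
    ∀ s ≤ d, ¬ p ∣ Nat.choose (k - s) (d - s) := by
  intro s hs hdvd
  have hdk := hg.1
  have hsub : (k - s) - (d - s) = k - d := by omega
  have hle : d - s ≤ k - s := by omega
  have hb : Nat.log p (k - s) < Nat.log p (k - s) + 1 := Nat.lt_succ_self _
  have hmult := Nat.Prime.emultiplicity_choose hp hle hb
  rw [hsub] at hmult
  have hempty : ({i ∈ Finset.Ico 1 (Nat.log p (k - s) + 1) |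
      p ^ i ≤ (d - s) % p ^ i + (k - d) % p ^ i} : Finset ℕ) = ∅ := by
    ext i
    simp only [Finset.mem_filter, Finset.mem_Ico, Finset.notMem_empty, iff_false, not_and]
    rintro ⟨h1, _⟩ hcon
    exact absurd hcon (not_le.mpr (good_no_carry p d k hp hg i h1 (d - s) (Nat.sub_le d s)))
  rw [hempty] at hmult
  simp only [Finset.card_empty, Nat.cast_zero] at hmult
  have := emultiplicity_eq_zero.mp hmult
  exact this hdvd

lemma isUnit_cast_of_not_dvd (p l c : ℕ) (hp : p.Prime) (h : ¬ p ∣ c) :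
    IsUnit (c : ZMod (p ^ l)) := by
  haveI : NeZero (p ^ l) := ⟨pow_ne_zero l hp.pos.ne'⟩
  rw [ZMod.isUnit_iff_coprime]
  exact ((Nat.Prime.coprime_iff_not_dvd hp).mpr h).symm.pow_right l

lemma card_superset_in_slice {n : ℕ} (d : ℕ) (S A : Finset (Fin n)) (hSA : S ⊆ A)
    (hS : S.card ≤ d) :
    ((Finset.powersetCard d A).filter (fun T => S ⊆ T)).card
      = Nat.choose (A.card - S.card) (d - S.card) := by
  rw [← Finset.card_sdiff_of_subset hSA, ← Finset.card_powersetCard (d - S.card) (A \ S)]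
  apply Finset.card_bij' (fun T _ => T \ S) (fun T' _ => S ∪ T')
  · intro T hT
    simp only [Finset.mem_filter, Finset.mem_powersetCard] at hT
    obtain ⟨⟨hTA, hTd⟩, hST⟩ := hT
    rw [Finset.mem_powersetCard]
    exact ⟨Finset.sdiff_subset_sdiff hTA le_rfl,
      by rw [Finset.card_sdiff_of_subset hST, hTd]⟩
  · intro T' hT'
    rw [Finset.mem_powersetCard] at hT'
    obtain ⟨hT'A, hT'c⟩ := hT'
    have hdisj : Disjoint S T' := Finset.disjoint_left.mpr
      (fun a haS haT' => (Finset.mem_sdiff.mp (hT'A haT')).2 haS)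
    simp only [Finset.mem_filter, Finset.mem_powersetCard]
    refine ⟨⟨Finset.union_subset hSA (hT'A.trans Finset.sdiff_subset), ?_⟩,
      Finset.subset_union_left⟩
    rw [Finset.card_union_of_disjoint hdisj, hT'c]
    omega
  · intro T hT
    simp only [Finset.mem_filter, Finset.mem_powersetCard] at hT
    exact Finset.union_sdiff_of_subset hT.2
  · intro T' hT'
    rw [Finset.mem_powersetCard] at hT'
    have hdisj : Disjoint S T' := Finset.disjoint_left.mpr
      (fun a haS haT' => (Finset.mem_sdiff.mp (hT'.1 haT')).2 haS)
    rw [Finset.union_sdiff_cancel_left hdisj]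

lemma sum_insert_split {n : ℕ} {M : Type*} [AddCommGroup M] (d : ℕ) (x : Fin n)
    (A' : Finset (Fin n)) (hx : x ∉ A') (g : Finset (Fin n) → M) :
    ∑ T ∈ Finset.powersetCard (d + 1) (insert x A'), g T
      = ∑ T ∈ Finset.powersetCard (d + 1) A', g T
        + ∑ T' ∈ Finset.powersetCard d A', g (insert x T') := by
  rw [Finset.powersetCard_succ_insert hx, Finset.sum_union, Finset.sum_image]
  · intro T1 h1 T2 h2 he
    have hx1 : x ∉ T1 := fun h => hx ((Finset.mem_powersetCard.mp h1).1 h)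
    have hx2 : x ∉ T2 := fun h => hx ((Finset.mem_powersetCard.mp h2).1 h)
    rw [← Finset.erase_insert hx1, ← Finset.erase_insert hx2, he]
  · rw [Finset.disjoint_left]
    intro T hT hT'
    obtain ⟨T', _, rfl⟩ := Finset.mem_image.mp hT'
    exact hx ((Finset.mem_powersetCard.mp hT).1 (Finset.mem_insert_self x T'))

lemma indep_slice (p l : ℕ) (hp : p.Prime) {n : ℕ} :
    ∀ d (U : Finset (Fin n)) (k : ℕ) (g : Finset (Fin n) → ZMod (p ^ l)),
      d ≤ k → k + d ≤ U.card →
      (∀ s ≤ d, ¬ p ∣ Nat.choose (k - s) (d - s)) →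
      (∀ A ⊆ U, A.card = k → ∑ T ∈ Finset.powersetCard d A, g T = 0) →
      ∀ T ⊆ U, T.card = d → g T = 0 := by
  intro d
  induction d with
  | zero =>
    intro U k g hdk hkU hB hA T hTU hT
    obtain ⟨A, hAU, hAc⟩ := Finset.exists_subset_card_eq (show k ≤ U.card by omega)
    have h0 := hA A hAU hAc
    rw [Finset.powersetCard_zero, Finset.sum_singleton] at h0
    rw [Finset.card_eq_zero.mp hT]
    exact h0
  | succ d ih =>
    intro U k g hdk hkU hB hA
    have swap : ∀ i j : Fin n, i ∈ U → j ∈ U → i ≠ j →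
        ∀ T' ⊆ U \ {i, j}, T'.card = d → g (insert i T') = g (insert j T') := by
      intro i j hiU hjU hij T' hT'U hT'c
      have hijU : ({i, j} : Finset (Fin n)) ⊆ U := by
        intro a ha
        simp only [Finset.mem_insert, Finset.mem_singleton] at ha
        rcases ha with h | h <;> subst h <;> assumption
      have hUcard : (U \ {i, j}).card = U.card - 2 := by
        rw [Finset.card_sdiff_of_subset hijU, Finset.card_insert_of_notMem (by simp [hij]),
          Finset.card_singleton]
      have hins : ∀ (A' : Finset (Fin n)), A' ⊆ U \ {i, j} → A'.card = k - 1 →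
          ∀ x : Fin n, x ∈ U → x ∉ A' →
          ∑ T'' ∈ Finset.powersetCard d A', g (insert x T'')
            = - ∑ T ∈ Finset.powersetCard (d + 1) A', g T := by
        intro A' hA'U hA'c x hxU hxA'
        have h0 := hA (insert x A')
          (Finset.insert_subset hxU (hA'U.trans Finset.sdiff_subset))
          (by rw [Finset.card_insert_of_notMem hxA', hA'c]; omega)
        rw [sum_insert_split d x A' hxA' g] at h0
        exact eq_neg_of_add_eq_zero_right h0
      have key := ih (U \ {i, j}) (k - 1)
        (fun T'' => g (insert i T'') - g (insert j T''))
        (by omega) (by omega)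
        (fun s hs => by
          have h := hB (s + 1) (by omega)
          have h1 : k - 1 - s = k - (s + 1) := by omega
          have h2 : d - s = d + 1 - (s + 1) := by omega
          rw [h1, h2]; exact h)
        (by
          intro A' hA'U hA'c
          have hiA' : i ∉ A' := fun h => by
            have := (Finset.mem_sdiff.mp (hA'U h)).2; simp at this
          have hjA' : j ∉ A' := fun h => by
            have := (Finset.mem_sdiff.mp (hA'U h)).2; simp at this
          rw [Finset.sum_sub_distrib, hins A' hA'U hA'c i hiU hiA',
            hins A' hA'U hA'c j hjU hjA', sub_self])
      have h := key T' hT'U hT'c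
      exact sub_eq_zero.mp h
    have const : ∀ N (T1 T2 : Finset (Fin n)), T1 ⊆ U → T2 ⊆ U →
        T1.card = d + 1 → T2.card = d + 1 → (T1 \ T2).card ≤ N → g T1 = g T2 := by
      intro N
      induction N with
      | zero =>
        intro T1 T2 h1 h2 hc1 hc2 hN
        have hemp : T1 \ T2 = ∅ := Finset.card_eq_zero.mp (Nat.le_zero.mp hN)
        have hsub : T1 ⊆ T2 := by rwa [Finset.sdiff_eq_empty_iff_subset] at hemp
        rw [Finset.eq_of_subset_of_card_le hsub (by omega)]
      | succ N ihN =>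
        intro T1 T2 h1 h2 hc1 hc2 hN
        by_cases heq : T1 = T2
        · rw [heq]
        · have hne : (T1 \ T2).Nonempty := by
            rw [Finset.sdiff_nonempty]
            intro hsub
            exact heq (Finset.eq_of_subset_of_card_le hsub (by omega))
          have hne2 : (T2 \ T1).Nonempty := by
            rw [Finset.sdiff_nonempty]
            intro hsub
            exact heq (Finset.eq_of_subset_of_card_le hsub (by omega)).symm
          obtain ⟨i, hi⟩ := hne
          obtain ⟨j, hj⟩ := hne2
          rw [Finset.mem_sdiff] at hi hj
          have hij : i ≠ j := fun h => hj.2 (h ▸ hi.1)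
          have hjT1 : j ∉ T1 := hj.2
          have hjT1e : j ∉ T1.erase i := fun h => hjT1 (Finset.erase_subset _ _ h)
          set T3 := insert j (T1.erase i) with hT3
          have step1 : g T1 = g T3 := by
            have hT'sub : T1.erase i ⊆ U \ {i, j} := by
              intro a ha
              rw [Finset.mem_sdiff]
              refine ⟨h1 (Finset.erase_subset _ _ ha), ?_⟩
              simp only [Finset.mem_insert, Finset.mem_singleton]
              rintro (rfl | rfl)
              · exact (Finset.notMem_erase a T1) ha
              · exact hjT1 (Finset.erase_subset _ _ ha)
            have h := swap i j (h1 hi.1) (h2 hj.1) hij (T1.erase i) hT'sub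
              (by rw [Finset.card_erase_of_mem hi.1, hc1]; omega)
            rw [Finset.insert_erase hi.1] at h
            exact h
          rw [step1]
          apply ihN T3 T2 (Finset.insert_subset (h2 hj.1)
            ((Finset.erase_subset _ _).trans h1)) h2
            (by rw [Finset.card_insert_of_notMem hjT1e,
              Finset.card_erase_of_mem hi.1, hc1]; omega) hc2
          have hsub3 : T3 \ T2 ⊆ (T1 \ T2).erase i := by
            intro a ha
            rw [Finset.mem_sdiff] at ha
            obtain ⟨haT3, haT2⟩ := ha
            rw [hT3, Finset.mem_insert] at haT3
            rcases haT3 with rfl | haT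
            · exact absurd hj.1 haT2
            · rw [Finset.mem_erase] at haT ⊢
              exact ⟨haT.1, Finset.mem_sdiff.mpr ⟨haT.2, haT2⟩⟩
          calc (T3 \ T2).card ≤ ((T1 \ T2).erase i).card := Finset.card_le_card hsub3
            _ = (T1 \ T2).card - 1 := Finset.card_erase_of_mem (Finset.mem_sdiff.mpr hi)
            _ ≤ N := by omega
    intro T hTU hTc
    obtain ⟨A, hAU, hAc⟩ := Finset.exists_subset_card_eq (show k ≤ U.card by omega)
    have hsum := hA A hAU hAc
    have hconst : ∀ T' ∈ Finset.powersetCard (d + 1) A, g T' = g T := by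
      intro T' hT'
      rw [Finset.mem_powersetCard] at hT'
      exact const (T' \ T).card T' T (hT'.1.trans hAU) hTU hT'.2 hTc le_rfl
    rw [Finset.sum_congr rfl hconst, Finset.sum_const, Finset.card_powersetCard, hAc] at hsum
    have hunit := isUnit_cast_of_not_dvd p l (k.choose (d + 1)) hp
      (by simpa using hB 0 (Nat.zero_le _))
    rw [nsmul_eq_mul] at hsum
    exact (hunit.mul_right_eq_zero).mp hsum

lemma prod_ite_indicator {n : ℕ} (S A : Finset (Fin n)) :
    (∏ i ∈ S, if i ∈ A then (1 : ℤ) else 0) = if S ⊆ A then 1 else 0 := by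
  by_cases h : S ⊆ A
  · rw [if_pos h]
    exact Finset.prod_eq_one (fun i hi => if_pos (h hi))
  · rw [if_neg h]
    obtain ⟨i, hiS, hiA⟩ := Finset.not_subset.mp h
    exact Finset.prod_eq_zero hiS (if_neg hiA)

lemma ind_smul {n : ℕ} {M : Type*} [AddCommGroup M] (S A : Finset (Fin n)) (x : M) :
    (∏ i ∈ S, if i ∈ A then (1 : ℤ) else 0) • x = if S ⊆ A then x else 0 := by
  rw [prod_ite_indicator]
  split <;> simp

lemma subtype_sum {n d : ℕ} {M : Type*} [AddCommMonoid M] (A : Finset (Fin n))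
    (F : Finset (Fin n) → M) :
    (∑ T : {T : Finset (Fin n) // T.card = d},
        if (T : Finset (Fin n)) ⊆ A then F T.1 else 0)
      = ∑ T ∈ Finset.powersetCard d A, F T := by
  have h1 : Finset.powersetCard d A
      = (Finset.univ.filter (fun T : Finset (Fin n) => T.card = d)).filter
          (fun T => T ⊆ A) := by
    ext T
    simp [Finset.mem_powersetCard, and_comm]
  rw [h1, Finset.sum_filter]
  rw [← Finset.sum_subtype (Finset.univ.filter (fun T : Finset (Fin n) => T.card = d))
    (by intro x; simp) (fun T => if T ⊆ A then F T else 0)]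

lemma rep_to_powerset {n d : ℕ} {M : Type*} [AddCommGroup M] (A : Finset (Fin n))
    (b : {T : Finset (Fin n) // T.card = d} → M) :
    (∑ T : {T : Finset (Fin n) // T.card = d},
        (∏ i ∈ (T : Finset (Fin n)), if i ∈ A then (1 : ℤ) else 0) • b T)
      = ∑ T ∈ Finset.powersetCard d A,
          (if h : T.card = d then b ⟨T, h⟩ else 0) := by
  rw [← subtype_sum A (fun T => if h : T.card = d then b ⟨T, h⟩ else 0)]
  apply Finset.sum_congr rfl
  intro T _
  rw [ind_smul]
  congr 1
  rw [dif_pos T.2]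

lemma expand_sum {n : ℕ} (p l d k : ℕ) (hp : p.Prime)
    (hB : ∀ s ≤ d, ¬ p ∣ Nat.choose (k - s) (d - s))
    (a : Finset (Fin n) → ZMod (p ^ l)) (A : Finset (Fin n)) (hA : A.card = k) :
    (∑ T ∈ Finset.powersetCard d A, ∑ S ∈ T.powerset,
        Ring.inverse ((Nat.choose (k - S.card) (d - S.card) : ZMod (p ^ l))) * a S)
      = ∑ S ∈ A.powerset.filter (fun S => S.card ≤ d), a S := by
  set F : Finset (Fin n) → ZMod (p ^ l) := fun S =>
    Ring.inverse ((Nat.choose (k - S.card) (d - S.card) : ZMod (p ^ l))) * a S with hF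
  have hstep : ∀ T ∈ Finset.powersetCard d A,
      (∑ S ∈ T.powerset, F S) = ∑ S ∈ A.powerset, if S ⊆ T then F S else 0 := by
    intro T hT
    rw [Finset.mem_powersetCard] at hT
    rw [← Finset.sum_filter]
    congr 1
    ext S
    simp only [Finset.mem_filter, Finset.mem_powerset]
    exact ⟨fun h => ⟨h.trans hT.1, h⟩, fun h => h.2⟩
  rw [Finset.sum_congr rfl hstep, Finset.sum_comm]
  have hcount : ∀ S ∈ A.powerset,
      (∑ T ∈ Finset.powersetCard d A, if S ⊆ T then F S else 0)
        = (((Finset.powersetCard d A).filter (fun T => S ⊆ T)).card) • F S := by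
    intro S _
    rw [← Finset.sum_filter, Finset.sum_const]
  rw [Finset.sum_congr rfl hcount,
    ← Finset.sum_filter_add_sum_filter_not A.powerset (fun S => S.card ≤ d)]
  have hzero : (∑ S ∈ A.powerset.filter (fun S => ¬ S.card ≤ d),
      (((Finset.powersetCard d A).filter (fun T => S ⊆ T)).card) • F S) = 0 := by
    apply Finset.sum_eq_zero
    intro S hS
    rw [Finset.mem_filter] at hS
    have hemp : (Finset.powersetCard d A).filter (fun T => S ⊆ T) = ∅ := by
      rw [Finset.filter_eq_empty_iff]
      intro T hT hST
      rw [Finset.mem_powersetCard] at hT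
      exact hS.2 (hT.2 ▸ Finset.card_le_card hST)
    rw [hemp]
    simp
  rw [hzero, add_zero]
  apply Finset.sum_congr rfl
  intro S hS
  rw [Finset.mem_filter, Finset.mem_powerset] at hS
  have hunit : IsUnit ((Nat.choose (k - S.card) (d - S.card) : ZMod (p ^ l))) :=
    isUnit_cast_of_not_dvd p l _ hp (hB S.card hS.2)
  rw [card_superset_in_slice d S A hS.1 hS.2, hA, hF, nsmul_eq_mul, ← mul_assoc,
    Ring.mul_inverse_cancel _ hunit, one_mul]

theorem homogeneous_basis_good_slice
    (p l n k d : ℕ) (hp : p.Prime)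
    (hdk : d ≤ k) (hkn : k ≤ n - d) (hgood : IsGoodSlice p d k)
    (f : Finset (Fin n) → ZMod (p ^ l))
    (hf : ∃ a : Finset (Fin n) → ZMod (p ^ l), ∀ A : Finset (Fin n), A.card = k →
      f A = ∑ S ∈ Finset.univ.filter (fun S : Finset (Fin n) => S.card ≤ d),
        (∏ i ∈ S, if i ∈ A then (1 : ℤ) else 0) • a S) :
    ∃! b : {T : Finset (Fin n) // T.card = d} → ZMod (p ^ l),
      ∀ A : Finset (Fin n), A.card = k →
        f A = ∑ T : {T : Finset (Fin n) // T.card = d},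
          (∏ i ∈ (T : Finset (Fin n)), if i ∈ A then (1 : ℤ) else 0) • b T := by
  obtain ⟨a, ha⟩ := hf
  have hnd : d ≤ n := hdk.trans (hkn.trans (Nat.sub_le n d))
  have hkn' : k + d ≤ n := by omega
  have hB := good_not_dvd_choose p d k hp hgood
  set b0 : {T : Finset (Fin n) // T.card = d} → ZMod (p ^ l) := fun T =>
    ∑ S ∈ (T : Finset (Fin n)).powerset,
      Ring.inverse ((Nat.choose (k - S.card) (d - S.card) : ZMod (p ^ l))) * a S with hb0
  have hexist : ∀ A : Finset (Fin n), A.card = k →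
      f A = ∑ T : {T : Finset (Fin n) // T.card = d},
        (∏ i ∈ (T : Finset (Fin n)), if i ∈ A then (1 : ℤ) else 0) • b0 T := by
    intro A hAc
    rw [rep_to_powerset A b0, ha A hAc]
    have hLHS : (∑ S ∈ Finset.univ.filter (fun S : Finset (Fin n) => S.card ≤ d),
        (∏ i ∈ S, if i ∈ A then (1 : ℤ) else 0) • a S)
          = ∑ S ∈ A.powerset.filter (fun S => S.card ≤ d), a S := by
      rw [Finset.sum_congr rfl (fun S _ => ind_smul S A (a S)), ← Finset.sum_filter]
      congr 1
      ext S
      simp [Finset.mem_powerset, and_comm]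
    rw [hLHS, ← expand_sum p l d k hp hB a A hAc]
    apply Finset.sum_congr rfl
    intro T hT
    rw [Finset.mem_powersetCard] at hT
    rw [dif_pos hT.2]
  refine ⟨b0, hexist, ?_⟩
  intro b1 hb1
  set g : Finset (Fin n) → ZMod (p ^ l) := fun T =>
    if h : T.card = d then b1 ⟨T, h⟩ - b0 ⟨T, h⟩ else 0 with hg
  have hg0 : ∀ A ⊆ (Finset.univ : Finset (Fin n)), A.card = k →
      ∑ T ∈ Finset.powersetCard d A, g T = 0 := by
    intro A _ hAc
    have h1 := hb1 A hAc
    have h2 := hexist A hAc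
    rw [rep_to_powerset A b1] at h1
    rw [rep_to_powerset A b0] at h2
    have : (∑ T ∈ Finset.powersetCard d A, g T)
        = (∑ T ∈ Finset.powersetCard d A, (if h : T.card = d then b1 ⟨T, h⟩ else 0))
          - (∑ T ∈ Finset.powersetCard d A, (if h : T.card = d then b0 ⟨T, h⟩ else 0)) := by
      rw [← Finset.sum_sub_distrib]
      apply Finset.sum_congr rfl
      intro T hT
      rw [Finset.mem_powersetCard] at hT
      rw [hg]
      simp only [dif_pos hT.2]
    rw [this, ← h1, ← h2, sub_self]
  have hindep := indep_slice p l hp d (Finset.univ : Finset (Fin n)) k g hdk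
    (by rw [Finset.card_univ, Fintype.card_fin]; exact hkn') hB hg0
  funext T
  have := hindep T.1 (Finset.subset_univ _) T.2
  rw [hg] at this
  simp only [dif_pos T.2] at this
  have h4 : b1 ⟨T.1, T.2⟩ - b0 ⟨T.1, T.2⟩ = 0 := this
  have h5 : b1 T - b0 T = 0 := by simpa using h4
  exact sub_eq_zero.mp h5
end

section
/- There exists N such that for every integer n ≥ N and arbitrary integers k with n^{1/4} ≤ k ≤ n/2 and d with 1 ≤ d ≤ k^{0.1}, setting ℓ = ⌊n/√k⌋, the binomial coefficients satisfy C(n−ℓ, k) < C(n−2d, k−d). -/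
/-!
STATEMENT 16: Binomial coefficient inequality: for large n, n^{1/4} ≤ k ≤ n/2,
1 ≤ d ≤ k^{0.1} and ℓ = ⌊n/√k⌋, we have C(n−ℓ, k) < C(n−2d, k−d).
-/


private lemma stepB (m j : ℕ) (hj : 1 ≤ j) :
    (m.choose (j+1) : ℝ) ≤ m.choose j * ((m:ℝ) / j) := by
  rcases le_or_gt m j with h | h
  · simp [Nat.choose_eq_zero_of_lt (show m < j+1 by omega)]
    positivity
  · have key := congrArg (Nat.cast : ℕ → ℝ) (Nat.choose_succ_right_eq m j)
    push_cast [Nat.cast_sub h.le] at key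
    have hjR : (0:ℝ) < j := by exact_mod_cast hj
    have hC : (0:ℝ) ≤ m.choose j := Nat.cast_nonneg _
    have hm : (j:ℝ) < m := by exact_mod_cast h
    have h1 : (m.choose (j+1) : ℝ) = m.choose j * ((m:ℝ) - j) / (j+1) := by
      field_simp
      linarith [key]
    rw [h1, ← mul_div_assoc, div_le_div_iff₀ (by positivity) hjR]
    nlinarith [mul_nonneg hC (sq_nonneg (j:ℝ)), mul_nonneg hC (le_trans hjR.le hm.le)]

private lemma lemB (m r : ℕ) (hr : 1 ≤ r) (d : ℕ) :
    (m.choose (r+d) : ℝ) ≤ m.choose r * ((m:ℝ) / r)^d := by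
  induction d with
  | zero => simp
  | succ d ih =>
    have hrR : (0:ℝ) < r := by exact_mod_cast hr
    have hdiv : (m:ℝ)/((r:ℝ)+d) ≤ (m:ℝ)/r :=
      div_le_div_of_nonneg_left (Nat.cast_nonneg m) hrR
        (by linarith [Nat.cast_nonneg (α := ℝ) d])
    calc (m.choose (r+d+1) : ℝ) ≤ m.choose (r+d) * ((m:ℝ) / ((r:ℝ)+d)) := by
          have := stepB m (r+d) (by omega)
          push_cast at this ⊢
          exact this
      _ ≤ (m.choose r * ((m:ℝ)/r)^d) * ((m:ℝ)/r) := by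
          apply mul_le_mul ih hdiv (by positivity) (by positivity)
      _ = m.choose r * ((m:ℝ)/r)^(d+1) := by ring

private lemma stepD (m r : ℕ) (hr : r ≤ m) :
    (m.choose r : ℝ) * (1 + (r:ℝ)/(m+1)) ≤ ((m+1).choose r : ℝ) := by
  have key := congrArg (Nat.cast : ℕ → ℝ) (Nat.choose_mul_succ_eq m r)
  push_cast [Nat.cast_sub (show r ≤ m+1 by omega)] at key
  have hrm : (r:ℝ) ≤ m := by exact_mod_cast hr
  have hpos : (0:ℝ) < (m:ℝ)+1-r := by linarith
  have hm1 : (0:ℝ) < (m:ℝ)+1 := by positivity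
  have hr0 : (0:ℝ) ≤ r := Nat.cast_nonneg _
  have hC : (0:ℝ) ≤ m.choose r := Nat.cast_nonneg _
  have h1 : ((m+1).choose r : ℝ) = m.choose r * (((m:ℝ)+1)/((m:ℝ)+1-r)) := by
    field_simp
    linarith [key]
  rw [h1]
  apply mul_le_mul_of_nonneg_left ?_ hC
  have e : 1 + (r:ℝ)/((m:ℝ)+1) = ((m:ℝ)+1+r)/((m:ℝ)+1) := by field_simp
  rw [e, div_le_div_iff₀ hm1 hpos]
  nlinarith

private lemma lemD (m r : ℕ) (hm : 1 ≤ m) (hr : r ≤ m) (t : ℕ) :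
    (m.choose r : ℝ) * (1 + (r:ℝ)/(m+t))^t ≤ ((m+t).choose r : ℝ) := by
  induction t with
  | zero => simp
  | succ t ih =>
    have hm0 : (0:ℝ) < (m:ℝ) + t := by
      have : (1:ℝ) ≤ m := by exact_mod_cast hm
      have : (0:ℝ) ≤ t := Nat.cast_nonneg _
      linarith
    have hdiv : (r:ℝ)/((m:ℝ)+t+1) ≤ (r:ℝ)/((m:ℝ)+t) :=
      div_le_div_of_nonneg_left (Nat.cast_nonneg r) hm0 (by linarith)
    have hb : (0:ℝ) ≤ 1 + (r:ℝ)/((m:ℝ)+t+1) := by positivity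
    have hpow : (1 + (r:ℝ)/((m:ℝ)+t+1))^t ≤ (1 + (r:ℝ)/((m:ℝ)+t))^t :=
      pow_le_pow_left₀ hb (by linarith) t
    push_cast
    calc (m.choose r : ℝ) * (1 + (r:ℝ)/((m:ℝ)+(↑t+1)))^(t+1)
        = ((m.choose r : ℝ) * (1 + (r:ℝ)/((m:ℝ)+t+1))^t) * (1 + (r:ℝ)/((m:ℝ)+t+1)) := by
          ring_nf
      _ ≤ ((m.choose r : ℝ) * (1 + (r:ℝ)/((m:ℝ)+t))^t) * (1 + (r:ℝ)/((m:ℝ)+t+1)) := by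
          apply mul_le_mul_of_nonneg_right ?_ hb
          exact mul_le_mul_of_nonneg_left hpow (Nat.cast_nonneg _)
      _ ≤ ((m+t).choose r : ℝ) * (1 + (r:ℝ)/((m:ℝ)+t+1)) := by
          apply mul_le_mul_of_nonneg_right ?_ hb
          have := ih
          push_cast at this
          exact this
      _ ≤ (((m+t)+1).choose r : ℝ) := by
          have := stepD (m+t) r (by omega)
          push_cast at this ⊢
          exact this

set_option maxHeartbeats 1000000 in
theorem binomial_count_inequality :
    ∃ N : ℕ, ∀ n k d : ℕ, N ≤ n →
      (n : ℝ) ^ ((1 : ℝ) / 4) ≤ (k : ℝ) → 2 * k ≤ n →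
      1 ≤ d → (d : ℝ) ≤ (k : ℝ) ^ ((0.1 : ℝ)) →
      (n - ⌊(n : ℝ) / Real.sqrt k⌋₊).choose k < (n - 2 * d).choose (k - d) := by
  use 10^60
  intro n k d hN hk14 hk2 hd1 hd2
  have hx60 : (10:ℝ)^60 ≤ (n:ℝ) := by exact_mod_cast hN
  have hx0 : (0:ℝ) < (n:ℝ) := by exact_mod_cast Nat.pos_of_ne_zero (by omega)
  have hyx : 2*(k:ℝ) ≤ (n:ℝ) := by exact_mod_cast hk2
  have hy0 : (0:ℝ) ≤ (k:ℝ) := Nat.cast_nonneg k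
  have hy4 : (n:ℝ) ≤ (k:ℝ)^4 := by
    calc (n:ℝ) = ((n:ℝ) ^ ((1:ℝ)/4))^4 := by
          rw [← Real.rpow_natCast ((n:ℝ) ^ ((1:ℝ)/4)) 4, ← Real.rpow_mul hx0.le]
          norm_num
      _ ≤ (k:ℝ)^4 := pow_le_pow_left₀ (Real.rpow_nonneg hx0.le _) hk14 4
  have hy15 : (10:ℝ)^15 ≤ (k:ℝ) := by
    by_contra hcon
    push_neg at hcon
    have h1 : (k:ℝ)^4 < ((10:ℝ)^15)^4 := pow_lt_pow_left₀ hcon hy0 (by norm_num)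
    rw [show ((10:ℝ)^15)^4 = (10:ℝ)^60 by norm_num] at h1
    linarith
  set w := (k:ℝ) ^ ((0.1:ℝ)) with hwdef
  have hw10 : w^10 = (k:ℝ) := by
    rw [hwdef, ← Real.rpow_natCast ((k:ℝ) ^ ((0.1:ℝ))) 10, ← Real.rpow_mul hy0]
    norm_num
  have hw0 : (0:ℝ) ≤ w := Real.rpow_nonneg hy0 _
  have hw30 : (30:ℝ) ≤ w := by
    by_contra hcon
    push_neg at hcon
    have h1 : w^10 < (30:ℝ)^10 := pow_lt_pow_left₀ hcon hw0 (by norm_num)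
    rw [hw10] at h1
    norm_num at h1 hy15
    linarith
  have hw0' : (0:ℝ) < w := by linarith
  have hw1 : (1:ℝ) ≤ w := by linarith
  have hs : Real.sqrt (k:ℝ) = w^5 := by
    rw [← hw10, show (w^10) = (w^5)^2 by ring]
    exact Real.sqrt_sq (pow_nonneg hw0 5)
  rw [hs]
  set l := ⌊(n:ℝ) / w^5⌋₊ with hldef
  have hw5pos : (0:ℝ) < w^5 := by positivity
  have hz1 : (1:ℝ) ≤ (d:ℝ) := by exact_mod_cast hd1
  have hzw : (d:ℝ) ≤ w := hd2
  have hL_le : (l:ℝ) ≤ (n:ℝ) / w^5 := Nat.floor_le (by positivity)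
  have hL_gt : (n:ℝ) / w^5 - 1 < (l:ℝ) := by
    have := Nat.lt_floor_add_one ((n:ℝ) / w^5)
    rw [← hldef] at this
    linarith
  -- auxiliary power facts
  have hp9 : (30:ℝ)^9 ≤ w^9 := pow_le_pow_left₀ (by norm_num) hw30 9
  have hp5 : (30:ℝ)^5 ≤ w^5 := pow_le_pow_left₀ (by norm_num) hw30 5
  have hp4 : (30:ℝ)^4 ≤ w^4 := pow_le_pow_left₀ (by norm_num) hw30 4
  have hp3 : (30:ℝ)^3 ≤ w^3 := pow_le_pow_left₀ (by norm_num) hw30 3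
  have h2w : 2*w ≤ w^10 := by
    nlinarith [mul_le_mul_of_nonneg_right hp9 hw0, hw0]
  have h46 : 4*w^6 ≤ w^10 := by
    nlinarith [mul_le_mul_of_nonneg_right hp4 (pow_nonneg hw0 6), pow_nonneg hw0 6]
  have h25 : 2*w^5 ≤ w^10 := by
    nlinarith [mul_le_mul_of_nonneg_right hp5 (pow_nonneg hw0 5), pow_nonneg hw0 5]
  have hx2w10 : 2*w^10 ≤ (n:ℝ) := by rw [hw10]; exact hyx
  -- nat inequalities
  have hdk : d < k := by
    have : (d:ℝ) < (k:ℝ) := by linarith [h2w, hzw, hw30, hw10.le, hw10.ge]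
    exact_mod_cast this
  have h2dl : 2*d ≤ l := by
    apply Nat.le_floor
    push_cast
    rw [le_div_iff₀ hw5pos]
    nlinarith [mul_le_mul_of_nonneg_right hzw hw5pos.le, h46, h25, hx2w10,
      pow_nonneg hw0 6, pow_nonneg hw0 10]
  have hlkn : l + k ≤ n := by
    have h2w5 : (2:ℝ) ≤ w^5 := by nlinarith [hp5]
    have hxw : (n:ℝ) / w^5 ≤ (n:ℝ) / 2 :=
      div_le_div_of_nonneg_left hx0.le (by norm_num) h2w5
    have h : (l:ℝ) + (k:ℝ) ≤ (n:ℝ) := by linarith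
    exact_mod_cast h
  have hkd1 : 1 ≤ k - d := by omega
  have hkdnl : k - d ≤ n - l := by omega
  have h1nl : 1 ≤ n - l := by omega
  have hld : l ≤ n := by omega
  -- casts
  have hcast_nl : ((n - l : ℕ):ℝ) = (n:ℝ) - l := by rw [Nat.cast_sub hld]
  have hcast_kd : ((k - d : ℕ):ℝ) = (k:ℝ) - d := by rw [Nat.cast_sub hdk.le]
  have hcast_t : ((l - 2*d : ℕ):ℝ) = (l:ℝ) - 2*(d:ℝ) := by
    rw [Nat.cast_sub h2dl]; push_cast; ring
  have hPpos : (0:ℝ) < ((n-l).choose (k-d) : ℝ) := by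
    exact_mod_cast Nat.choose_pos hkdnl
  have hyz1 : (1:ℝ) ≤ (k:ℝ) - d := by
    rw [← hcast_kd]; exact_mod_cast hkd1
  have hyz0 : (0:ℝ) < (k:ℝ) - d := by linarith
  have hxl0 : (0:ℝ) ≤ (n:ℝ) - l := by
    have : (n:ℝ) / w^5 ≤ (n:ℝ) := div_le_self hx0.le (by linarith [hp5])
    linarith
  -- main chain
  have main1 : ((n-l).choose k : ℝ)
      ≤ ((n-l).choose (k-d) : ℝ) * ((n:ℝ)/((k:ℝ)-d))^d := by
    have h := lemB (n-l) (k-d) hkd1 d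
    rw [show (k-d)+d = k from by omega] at h
    refine h.trans ?_
    apply mul_le_mul_of_nonneg_left ?_ (Nat.cast_nonneg _)
    apply pow_le_pow_left₀ (by rw [hcast_nl, hcast_kd]; positivity) ?_ d
    rw [hcast_nl, hcast_kd]
    apply div_le_div_of_nonneg_right ?_ hyz0.le
    linarith [Nat.cast_nonneg (α := ℝ) l]
  have main2 : ((n-l).choose (k-d) : ℝ) * (1 + ((k:ℝ)-d)/(n:ℝ))^(l-2*d)
      ≤ ((n - 2*d).choose (k-d) : ℝ) := by
    have h := lemD (n-l) (k-d) h1nl hkdnl (l-2*d)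
    rw [show (n-l) + (l-2*d) = n - 2*d from by omega] at h
    refine le_trans ?_ h
    apply mul_le_mul_of_nonneg_left ?_ (Nat.cast_nonneg _)
    apply pow_le_pow_left₀ (by positivity) ?_ _
    rw [hcast_nl, hcast_kd, hcast_t]
    have heq : ((n:ℝ) - ↑l) + ((l:ℝ) - 2*(d:ℝ)) = (n:ℝ) - 2*(d:ℝ) := by ring
    rw [heq]
    have hx2z : (0:ℝ) < (n:ℝ) - 2*(d:ℝ) := by linarith [hzw, h2w, hx2w10, hw30]
    have : ((k:ℝ)-d)/(n:ℝ) ≤ ((k:ℝ)-d)/((n:ℝ) - 2*(d:ℝ)) :=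
      div_le_div_of_nonneg_left hyz0.le hx2z (by linarith)
    linarith
  -- numeric key inequality
  have hkey : ((n:ℝ)/((k:ℝ)-d))^d < (1 + ((k:ℝ)-d)/(n:ℝ))^(l-2*d) := by
    have ha0 : (0:ℝ) < (n:ℝ)/((k:ℝ)-d) := by positivity
    have hb0 : (0:ℝ) < 1 + ((k:ℝ)-d)/(n:ℝ) := by positivity
    rw [show ((n:ℝ)/((k:ℝ)-d))^d = Real.exp ((d:ℝ) * Real.log ((n:ℝ)/((k:ℝ)-d))) from by
          rw [← Real.log_pow, Real.exp_log (pow_pos ha0 d)],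
        show (1 + ((k:ℝ)-d)/(n:ℝ))^(l-2*d)
            = Real.exp (((l-2*d : ℕ):ℝ) * Real.log (1 + ((k:ℝ)-d)/(n:ℝ))) from by
          rw [← Real.log_pow, Real.exp_log (pow_pos hb0 _)]]
    apply Real.exp_lt_exp.mpr
    rw [hcast_t]
    have hloga_le : Real.log ((n:ℝ)/((k:ℝ)-d)) ≤ 40*w := by
      have h1 : (n:ℝ)/((k:ℝ)-d) ≤ (n:ℝ) := div_le_self hx0.le hyz1
      have h2 : Real.log ((n:ℝ)/((k:ℝ)-d)) ≤ Real.log (n:ℝ) := Real.log_le_log ha0 h1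
      have hxw40 : (n:ℝ) ≤ w^40 := by
        have h : (k:ℝ)^4 = w^40 := by rw [← hw10]; ring
        linarith
      have h3 : Real.log (n:ℝ) ≤ Real.log (w^40) := Real.log_le_log hx0 hxw40
      have h4 : Real.log (w^40) = 40 * Real.log w := by
        rw [Real.log_pow]; push_cast; ring
      have h5 : Real.log w ≤ w - 1 := Real.log_le_sub_one_of_pos hw0'
      linarith
    have hLHS : (d:ℝ) * Real.log ((n:ℝ)/((k:ℝ)-d)) ≤ 40*w^2 := by
      have hla0 : 0 ≤ Real.log ((n:ℝ)/((k:ℝ)-d)) := by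
        apply Real.log_nonneg
        rw [le_div_iff₀ hyz0]
        linarith
      calc (d:ℝ) * Real.log ((n:ℝ)/((k:ℝ)-d)) ≤ w * (40*w) :=
            mul_le_mul hzw hloga_le hla0 hw0
        _ = 40*w^2 := by ring
    have hu0 : (0:ℝ) < ((k:ℝ)-d)/(n:ℝ) := by positivity
    have hlogb_ge : ((k:ℝ)-d)/(n:ℝ)/2 ≤ Real.log (1 + ((k:ℝ)-d)/(n:ℝ)) := by
      set u := ((k:ℝ)-d)/(n:ℝ) with hudef
      have hu1 : u ≤ 1 := by
        rw [hudef, div_le_iff₀ hx0]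
        linarith
      have hb0' : (0:ℝ) < 1 + u := by linarith
      have h1 : Real.log (1+u)⁻¹ ≤ (1+u)⁻¹ - 1 :=
        Real.log_le_sub_one_of_pos (by positivity)
      rw [Real.log_inv] at h1
      have h3 : 1 - (1+u)⁻¹ = u/(1+u) := by field_simp; ring
      have h4 : u/2 ≤ u/(1+u) :=
        div_le_div_of_nonneg_left hu0.le hb0' (by linarith)
      linarith
    have hT_ge : (n:ℝ)/(2*w^5) ≤ (l:ℝ) - 2*(d:ℝ) := by
      have e : (n:ℝ)/w^5 = 2*((n:ℝ)/(2*w^5)) := by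
        field_simp
      have h3 : 1 + 2*w ≤ (n:ℝ)/(2*w^5) := by
        rw [le_div_iff₀ (by positivity)]
        have hexp : (1+2*w)*(2*w^5) = 2*w^5 + 4*w^6 := by ring
        linarith [h25, h46, hx2w10]
      linarith [hL_gt, hzw]
    have hTlogb : w^5/8 ≤ ((l:ℝ) - 2*(d:ℝ)) * Real.log (1 + ((k:ℝ)-d)/(n:ℝ)) := by
      have hyzw : w^10/2 ≤ (k:ℝ) - d := by linarith [hzw, h2w, hw10.le, hw10.ge]
      have hlb2 : w^10/(4*(n:ℝ)) ≤ Real.log (1 + ((k:ℝ)-d)/(n:ℝ)) := by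
        calc w^10/(4*(n:ℝ)) = (w^10/2)/(n:ℝ)/2 := by
              field_simp; ring
          _ ≤ ((k:ℝ)-d)/(n:ℝ)/2 := by gcongr
          _ ≤ Real.log (1 + ((k:ℝ)-d)/(n:ℝ)) := hlogb_ge
      have hT0 : (0:ℝ) ≤ (n:ℝ)/(2*w^5) := by positivity
      calc w^5/8 = ((n:ℝ)/(2*w^5)) * (w^10/(4*(n:ℝ))) := by
            field_simp; ring
        _ ≤ ((l:ℝ) - 2*(d:ℝ)) * Real.log (1 + ((k:ℝ)-d)/(n:ℝ)) :=
            mul_le_mul hT_ge hlb2 (by positivity) (le_trans hT0 hT_ge)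
    have hfin : 40*w^2 < w^5/8 := by
      have key := mul_le_mul_of_nonneg_right hp3 (pow_nonneg hw0 2)
      have e : w^3*w^2 = w^5 := by ring
      rw [e] at key
      norm_num at key
      linarith [key, pow_pos hw0' 2]
    calc (d:ℝ) * Real.log ((n:ℝ)/((k:ℝ)-d)) ≤ 40*w^2 := hLHS
      _ < w^5/8 := hfin
      _ ≤ ((l:ℝ) - 2*(d:ℝ)) * Real.log (1 + ((k:ℝ)-d)/(n:ℝ)) := hTlogb
  have hmid : ((n-l).choose (k-d) : ℝ) * ((n:ℝ)/((k:ℝ)-d))^d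
      < ((n-l).choose (k-d) : ℝ) * (1 + ((k:ℝ)-d)/(n:ℝ))^(l-2*d) :=
    mul_lt_mul_of_pos_left hkey hPpos
  have hfinal : ((n-l).choose k : ℝ) < ((n - 2*d).choose (k-d) : ℝ) :=
    lt_of_le_of_lt main1 (lt_of_lt_of_le hmid main2)
  exact_mod_cast hfinal
end
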